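/- arXiv:2508.16061 — 2 statements merged into one kernel-verified Lean document; each statement's English description precedes it below -/
import Mathlib

section
/- Assume a₁₂ is of class C^{2,1} on [−1,1]². For every u ∈ C⁴([−1,1]²) there exists a constant C > 0 such that for every even N ≥ 4 (h = 2/N) and every interior grid node (x,y), |(L_h⁺ u)(x,y) − ( ∂x(a₁₂ ∂y u)(x,y) + ∂y(a₁₂ ∂x u)(x,y) )| ≤ C h². -/
open Set

noncomputable section

/-- The closed square `[-1,1]²` as a subset of `ℝ × ℝ`. -/
def Q2 : Set (ℝ × ℝ) := Set.Icc ((-1 : ℝ), (-1 : ℝ)) (1, 1)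

/-- Partial derivative in the first coordinate direction. -/
def px (f : ℝ × ℝ → ℝ) (z : ℝ × ℝ) : ℝ := fderiv ℝ f z (1, 0)

/-- Partial derivative in the second coordinate direction. -/
def py (f : ℝ × ℝ → ℝ) (z : ℝ × ℝ) : ℝ := fderiv ℝ f z (0, 1)

/-- `f` is of class `C^{2,1}` on `s`: twice continuously differentiable with Lipschitz
continuous second derivatives. -/
def C21On (f : ℝ × ℝ → ℝ) (s : Set (ℝ × ℝ)) : Prop :=
  ContDiffOn ℝ 2 f s ∧ ∃ K : NNReal, LipschitzOnWith K (iteratedFDerivWithin ℝ 2 f s) s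

/-- Grid node `(x_i, y_j) = (-1 + i h, -1 + j h)` with `h = 2/N`. -/
def nodePt (N i j : ℕ) : ℝ × ℝ := (-1 + i * (2 / (N : ℝ)), -1 + j * (2 / (N : ℝ)))

/-- The mixed-term operator `L_h⁻` (designed for negative `a₁₂`). -/
def Lhm (a12 : ℝ × ℝ → ℝ) (h : ℝ) (v : ℝ × ℝ → ℝ) (z : ℝ × ℝ) : ℝ :=
  (1 / (2 * h ^ 2)) *
    (-(a12 (z.1 - h / 2, z.2 + h) + a12 (z.1 - h, z.2 + h / 2)) * v (z.1 - h, z.2 + h)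
      + (a12 (z.1 - h / 2, z.2 + h) + a12 (z.1, z.2 + h / 2)) * v (z.1, z.2 + h)
      + (a12 (z.1 - h, z.2 + h / 2) + a12 (z.1 - h / 2, z.2)) * v (z.1 - h, z.2)
      - (a12 (z.1, z.2 + h / 2) + a12 (z.1 - h / 2, z.2)
          + a12 (z.1, z.2 - h / 2) + a12 (z.1 + h / 2, z.2)) * v z
      + (a12 (z.1 + h, z.2 - h / 2) + a12 (z.1 + h / 2, z.2)) * v (z.1 + h, z.2)
      + (a12 (z.1, z.2 - h / 2) + a12 (z.1 + h / 2, z.2 - h)) * v (z.1, z.2 - h)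
      - (a12 (z.1 + h, z.2 - h / 2) + a12 (z.1 + h / 2, z.2 - h)) * v (z.1 + h, z.2 - h))

/-- The mixed-term operator `L_h⁺` (designed for nonnegative `a₁₂`). -/
def Lhp (a12 : ℝ × ℝ → ℝ) (h : ℝ) (v : ℝ × ℝ → ℝ) (z : ℝ × ℝ) : ℝ :=
  (1 / (2 * h ^ 2)) *
    (-(a12 (z.1 + h / 2, z.2 + h) + a12 (z.1, z.2 + h / 2)) * v (z.1, z.2 + h)
      + (a12 (z.1 + h / 2, z.2 + h) + a12 (z.1 + h, z.2 + h / 2)) * v (z.1 + h, z.2 + h)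
      - (a12 (z.1 - h, z.2 - h / 2) + a12 (z.1 - h / 2, z.2)) * v (z.1 - h, z.2)
      + (a12 (z.1, z.2 + h / 2) + a12 (z.1 - h / 2, z.2)
          + a12 (z.1, z.2 - h / 2) + a12 (z.1 + h / 2, z.2)) * v z
      - (a12 (z.1 + h, z.2 + h / 2) + a12 (z.1 + h / 2, z.2)) * v (z.1 + h, z.2)
      + (a12 (z.1 - h, z.2 - h / 2) + a12 (z.1 - h / 2, z.2 - h)) * v (z.1 - h, z.2 - h)
      - (a12 (z.1, z.2 - h / 2) + a12 (z.1 - h / 2, z.2 - h)) * v (z.1, z.2 - h))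

open Topology

lemma q2_convex : Convex ℝ Q2 := by
  rw [Q2, ← Icc_prod_Icc]; exact (convex_Icc _ _).prod (convex_Icc _ _)
lemma q2_unique : UniqueDiffOn ℝ Q2 := by
  rw [Q2, ← Icc_prod_Icc]
  exact (uniqueDiffOn_Icc (by norm_num)).prod (uniqueDiffOn_Icc (by norm_num))
lemma q2_compact : IsCompact Q2 := isCompact_Icc
def D1 (f : ℝ × ℝ → ℝ) (v : ℝ × ℝ) : ℝ × ℝ → ℝ := fun x => fderivWithin ℝ f Q2 x v
lemma D1_cdo {f : ℝ × ℝ → ℝ} {N n : WithTop ℕ∞} (hf : ContDiffOn ℝ N f Q2)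
    (h : n + 1 ≤ N) (v : ℝ × ℝ) : ContDiffOn ℝ n (D1 f v) Q2 :=
  (hf.fderivWithin q2_unique h).clm_apply contDiffOn_const
lemma D1_smul (f : ℝ × ℝ → ℝ) (c : ℝ) (v : ℝ × ℝ) :
    D1 f (c • v) = fun x => c * D1 f v x := by
  funext x; simp [D1, map_smul, smul_eq_mul]
lemma lineHasDeriv (f : ℝ × ℝ → ℝ) (hf : DifferentiableOn ℝ f Q2) (p v : ℝ × ℝ)
    (hseg : ∀ t ∈ Icc (-1:ℝ) 1, p + t • v ∈ Q2) {t : ℝ} (ht : t ∈ Icc (-1:ℝ) 1) :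
    HasDerivWithinAt (fun s : ℝ => f (p + s • v)) (D1 f v (p + t • v)) (Icc (-1) 1) t := by
  have hline : HasDerivWithinAt (fun s : ℝ => p + s • v) v (Icc (-1:ℝ) 1) t := by
    have h1 : HasDerivAt (fun s : ℝ => s • v) ((1:ℝ) • v) t := (hasDerivAt_id t).smul_const v
    simpa [one_smul] using (h1.const_add p).hasDerivWithinAt
  have := (hf _ (hseg t ht)).hasFDerivWithinAt.comp_hasDerivWithinAt t hline
    (fun s hs => hseg s hs)
  exact this

lemma zero_mem_Icc : (0:ℝ) ∈ Icc (-1:ℝ) 1 := by norm_num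
lemma one_mem_Icc : (1:ℝ) ∈ Icc (-1:ℝ) 1 := by norm_num

/-- first-order Taylor along a segment with Lipschitz directional derivative. -/
lemma est1 (g : ℝ × ℝ → ℝ) (hgd : DifferentiableOn ℝ g Q2) (w : ℝ × ℝ) (K : ℝ) (hK0 : 0 ≤ K)
    (hK : ∀ p ∈ Q2, ∀ q ∈ Q2, |D1 g w p - D1 g w q| ≤ K * ‖p - q‖)
    (m : ℝ × ℝ) (hseg : ∀ t ∈ Icc (-1:ℝ) 1, m + t • w ∈ Q2) {t : ℝ}
    (ht : t ∈ Icc (-1:ℝ) 1) :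
    |g (m + t • w) - g m - t * D1 g w m| ≤ K * ‖w‖ := by
  have hm : m ∈ Q2 := by simpa using hseg 0 zero_mem_Icc
  set φ : ℝ → ℝ := fun s => g (m + s • w) - s * D1 g w m with hφ
  have hder : ∀ s ∈ Icc (-1:ℝ) 1,
      HasDerivWithinAt φ (D1 g w (m + s • w) - D1 g w m) (Icc (-1) 1) s := by
    intro s hs
    exact (lineHasDeriv g hgd m w hseg hs).sub
      ((hasDerivAt_mul_const (D1 g w m)).hasDerivWithinAt)
  have hbound : ∀ s ∈ Icc (-1:ℝ) 1, ‖D1 g w (m + s • w) - D1 g w m‖ ≤ K * ‖w‖ := by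
    intro s hs
    rw [Real.norm_eq_abs]
    calc |D1 g w (m + s • w) - D1 g w m| ≤ K * ‖(m + s • w) - m‖ :=
          hK _ (hseg s hs) _ hm
      _ = K * (|s| * ‖w‖) := by rw [add_sub_cancel_left, norm_smul, Real.norm_eq_abs]
      _ ≤ K * (1 * ‖w‖) := by
          apply mul_le_mul_of_nonneg_left _ hK0
          have : |s| ≤ 1 := abs_le.2 ⟨hs.1, hs.2⟩
          nlinarith [norm_nonneg w]
      _ = K * ‖w‖ := by ring
  have := (convex_Icc (-1:ℝ) 1).norm_image_sub_le_of_norm_hasDerivWithin_le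
    hder hbound zero_mem_Icc ht
  have h0 : φ 0 = g m := by simp [hφ]
  rw [h0, Real.norm_eq_abs, Real.norm_eq_abs, sub_zero] at this
  have ht1 : |t| ≤ 1 := abs_le.2 ⟨ht.1, ht.2⟩
  calc |g (m + t • w) - g m - t * D1 g w m| = |φ t - g m| := by rw [hφ]; ring_nf
    _ ≤ K * ‖w‖ * |t| := this
    _ ≤ K * ‖w‖ * 1 := by
        apply mul_le_mul_of_nonneg_left ht1 (by positivity)
    _ = K * ‖w‖ := by ring

lemma D1_neg (g : ℝ × ℝ → ℝ) (v : ℝ × ℝ) : D1 g (-v) = fun x => -(D1 g v x) := by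
  funext x; simp [D1, map_neg]

lemma neg_mem_Icc11 {t : ℝ} (ht : t ∈ Icc (-1:ℝ) 1) : -t ∈ Icc (-1:ℝ) 1 := by
  constructor <;> [linarith [ht.2]; linarith [ht.1]]

lemma hseg_neg {m v : ℝ × ℝ} (hseg : ∀ t ∈ Icc (-1:ℝ) 1, m + t • v ∈ Q2) :
    ∀ t ∈ Icc (-1:ℝ) 1, m + t • (-v) ∈ Q2 := by
  intro t ht
  have := hseg (-t) (neg_mem_Icc11 ht)
  simpa [smul_neg, neg_smul] using this

/-- centered second-order estimate. -/
lemma est2 (f : ℝ × ℝ → ℝ) (v : ℝ × ℝ) (K : ℝ) (hK0 : 0 ≤ K)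
    (hfd : DifferentiableOn ℝ f Q2) (hgd : DifferentiableOn ℝ (D1 f v) Q2)
    (hK : ∀ p ∈ Q2, ∀ q ∈ Q2, |D1 (D1 f v) v p - D1 (D1 f v) v q| ≤ K * ‖p - q‖)
    (m : ℝ × ℝ) (hseg : ∀ t ∈ Icc (-1:ℝ) 1, m + t • v ∈ Q2) :
    |f (m + v) - f (m - v) - 2 * D1 f v m| ≤ 2 * K * ‖v‖ := by
  have hm : m ∈ Q2 := by simpa using hseg 0 zero_mem_Icc
  set g := D1 f v with hg
  have hseg' := hseg_neg hseg
  set e : ℝ → ℝ := fun t => f (m + t • v) - f (m + t • (-v)) - t * (2 * g m) with he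
  have hKneg : ∀ p ∈ Q2, ∀ q ∈ Q2, |D1 g (-v) p - D1 g (-v) q| ≤ K * ‖p - q‖ := by
    intro p hp q hq
    rw [D1_neg]
    have := hK q hq p hp
    simp only []
    rw [show -D1 g v p - -D1 g v q = -(D1 g v p - D1 g v q) by ring, abs_neg,
      abs_sub_comm, norm_sub_rev]
    exact this
  have hder : ∀ t ∈ Icc (-1:ℝ) 1, HasDerivWithinAt e
      (g (m + t • v) + g (m + t • (-v)) - 2 * g m) (Icc (-1) 1) t := by
    intro t ht
    have h1 := lineHasDeriv f hfd m v hseg ht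
    have h2 := lineHasDeriv f hfd m (-v) hseg' ht
    have h3 : HasDerivWithinAt (fun t : ℝ => t * (2 * g m)) (2 * g m) (Icc (-1:ℝ) 1) t :=
      (hasDerivAt_mul_const (2 * g m)).hasDerivWithinAt
    have := (h1.sub h2).sub h3
    have hD : D1 f (-v) (m + t • (-v)) = -(g (m + t • (-v))) := by rw [D1_neg]
    rw [hD] at this
    convert this using 1
    · rfl
    · rfl
    · rfl
    · ring
  have hbound : ∀ t ∈ Icc (-1:ℝ) 1,
      ‖g (m + t • v) + g (m + t • (-v)) - 2 * g m‖ ≤ 2 * (K * ‖v‖) := by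
    intro t ht
    have h1 := est1 g hgd v K hK0 hK m hseg ht
    have h2 := est1 g hgd (-v) K hK0 hKneg m hseg' ht
    have hDneg : D1 g (-v) m = -(D1 g v m) := by rw [D1_neg]
    rw [hDneg, norm_neg] at h2
    rw [Real.norm_eq_abs]
    have hval : g (m + t • v) + g (m + t • (-v)) - 2 * g m =
        (g (m + t • v) - g m - t * D1 g v m) +
        (g (m + t • (-v)) - g m - t * -(D1 g v m)) := by ring
    rw [hval]
    calc |_ + _| ≤ |g (m + t • v) - g m - t * D1 g v m| +
          |g (m + t • (-v)) - g m - t * -(D1 g v m)| := abs_add_le _ _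
      _ ≤ K * ‖v‖ + K * ‖v‖ := add_le_add h1 (by simpa [norm_neg] using h2)
      _ = 2 * (K * ‖v‖) := by ring
  have := (convex_Icc (-1:ℝ) 1).norm_image_sub_le_of_norm_hasDerivWithin_le
    hder hbound zero_mem_Icc one_mem_Icc
  have h0 : e 0 = 0 := by simp [he]
  rw [h0, sub_zero, Real.norm_eq_abs, Real.norm_eq_abs] at this
  have h1v : e 1 = f (m + v) - f (m - v) - 2 * D1 f v m := by
    simp only [he, one_smul, smul_neg]
    rw [sub_eq_add_neg m v]
    ring_nf
    rfl
  rw [h1v] at this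
  calc |f (m + v) - f (m - v) - 2 * D1 f v m| ≤ 2 * (K * ‖v‖) * |1 - 0| := this
    _ = 2 * K * ‖v‖ := by rw [show (1:ℝ) - 0 = 1 by norm_num, abs_one]; ring

/-- average estimate. -/
lemma est3 (g : ℝ × ℝ → ℝ) (w : ℝ × ℝ) (K : ℝ) (hK0 : 0 ≤ K)
    (hgd : DifferentiableOn ℝ g Q2)
    (hK : ∀ p ∈ Q2, ∀ q ∈ Q2, |D1 g w p - D1 g w q| ≤ K * ‖p - q‖)
    (z : ℝ × ℝ) (hseg : ∀ t ∈ Icc (-1:ℝ) 1, z + t • w ∈ Q2) :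
    |g (z + w) + g (z - w) - 2 * g z| ≤ 2 * K * ‖w‖ := by
  have hseg' := hseg_neg hseg
  set b : ℝ → ℝ := fun t => g (z + t • w) + g (z + t • (-w)) - 2 * g z with hb
  have hder : ∀ t ∈ Icc (-1:ℝ) 1, HasDerivWithinAt b
      (D1 g w (z + t • w) - D1 g w (z + t • (-w))) (Icc (-1) 1) t := by
    intro t ht
    have h1 := lineHasDeriv g hgd z w hseg ht
    have h2 := lineHasDeriv g hgd z (-w) hseg' ht
    have := (h1.add h2).sub_const (2 * g z)
    have hD : D1 g (-w) (z + t • (-w)) = -(D1 g w (z + t • (-w))) := by rw [D1_neg]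
    rw [hD] at this
    convert this using 1
    · rfl
    · rfl
    · rfl
    · ring
  have hbound : ∀ t ∈ Icc (-1:ℝ) 1,
      ‖D1 g w (z + t • w) - D1 g w (z + t • (-w))‖ ≤ 2 * (K * ‖w‖) := by
    intro t ht
    rw [Real.norm_eq_abs]
    have ht1 : |t| ≤ 1 := abs_le.2 ⟨ht.1, ht.2⟩
    calc |D1 g w (z + t • w) - D1 g w (z + t • (-w))| ≤
        K * ‖(z + t • w) - (z + t • (-w))‖ := hK _ (hseg t ht) _ (hseg' t ht)
      _ = K * (|2 * t| * ‖w‖) := by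
          rw [show (z + t • w) - (z + t • (-w)) = (2 * t) • w by module, norm_smul,
            Real.norm_eq_abs]
      _ ≤ K * (2 * ‖w‖) := by
          apply mul_le_mul_of_nonneg_left _ hK0
          rw [abs_mul, abs_two]
          nlinarith [norm_nonneg w]
      _ = 2 * (K * ‖w‖) := by ring
  have := (convex_Icc (-1:ℝ) 1).norm_image_sub_le_of_norm_hasDerivWithin_le
    hder hbound zero_mem_Icc one_mem_Icc
  have h0 : b 0 = 0 := by simp [hb]; ring
  rw [h0, sub_zero, Real.norm_eq_abs, Real.norm_eq_abs] at this
  have h1v : b 1 = g (z + w) + g (z - w) - 2 * g z := by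
    simp only [hb, one_smul, smul_neg]
    rw [sub_eq_add_neg z w]
  rw [h1v] at this
  calc |g (z + w) + g (z - w) - 2 * g z| ≤ 2 * (K * ‖w‖) * |1 - 0| := this
    _ = 2 * K * ‖w‖ := by rw [show (1:ℝ) - 0 = 1 by norm_num, abs_one]; ring

/-- centered third-order estimate. -/
lemma est4 (f : ℝ × ℝ → ℝ) (v : ℝ × ℝ) (K : ℝ) (hK0 : 0 ≤ K)
    (hfd : DifferentiableOn ℝ f Q2) (hgd : DifferentiableOn ℝ (D1 f v) Q2)
    (hGd : DifferentiableOn ℝ (D1 (D1 f v) v) Q2)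
    (hK : ∀ p ∈ Q2, ∀ q ∈ Q2,
      |D1 (D1 (D1 f v) v) v p - D1 (D1 (D1 f v) v) v q| ≤ K * ‖p - q‖)
    (m : ℝ × ℝ) (hseg : ∀ t ∈ Icc (-1:ℝ) 1, m + t • v ∈ Q2) :
    |f (m + v) - f (m - v) - 2 * D1 f v m - (1/3) * D1 (D1 (D1 f v) v) v m|
      ≤ 2 * K * ‖v‖ := by
  have hm : m ∈ Q2 := by simpa using hseg 0 zero_mem_Icc
  set g := D1 f v with hgdef
  set G := D1 g v with hGdef
  set H := D1 G v with hHdef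
  have hseg' := hseg_neg hseg
  have hKneg : ∀ p ∈ Q2, ∀ q ∈ Q2, |D1 G (-v) p - D1 G (-v) q| ≤ K * ‖p - q‖ := by
    intro p hp q hq
    rw [D1_neg]
    have := hK p hp q hq
    simp only []
    rw [show -D1 G v p - -D1 G v q = -(D1 G v p - D1 G v q) by ring, abs_neg]
    exact this
  -- inner bound on b
  have hbbound : ∀ t ∈ Icc (-1:ℝ) 1,
      |g (m + t • v) + g (m + t • (-v)) - 2 * g m - t ^ 2 * H m| ≤ 2 * (K * ‖v‖) := by
    intro t ht
    set b : ℝ → ℝ := fun s => g (m + s • v) + g (m + s • (-v)) - 2 * g m - s ^ 2 * H m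
      with hbdef
    have hder : ∀ s ∈ Icc (-1:ℝ) 1, HasDerivWithinAt b
        (G (m + s • v) - G (m + s • (-v)) - 2 * s * H m) (Icc (-1) 1) s := by
      intro s hs
      have h1 := lineHasDeriv g hgd m v hseg hs
      have h2 := lineHasDeriv g hgd m (-v) hseg' hs
      have h3 : HasDerivWithinAt (fun s : ℝ => s ^ 2 * H m) (2 * s * H m)
          (Icc (-1:ℝ) 1) s := by
        have := (hasDerivAt_pow 2 s).mul_const (H m)
        simpa [pow_one] using this.hasDerivWithinAt
      have := ((h1.add h2).sub_const (2 * g m)).sub h3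
      have hD : D1 g (-v) (m + s • (-v)) = -(G (m + s • (-v))) := by
        rw [D1_neg]
      rw [hD] at this
      convert this using 1
      · rfl
      · rfl
      · rfl
      · ring
    have hbnd : ∀ s ∈ Icc (-1:ℝ) 1,
        ‖G (m + s • v) - G (m + s • (-v)) - 2 * s * H m‖ ≤ 2 * (K * ‖v‖) := by
      intro s hs
      have h1 := est1 G hGd v K hK0 hK m hseg hs
      have h2 := est1 G hGd (-v) K hK0 hKneg m hseg' hs
      have hDneg : D1 G (-v) m = -(D1 G v m) := by rw [D1_neg]
      rw [hDneg, norm_neg] at h2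
      rw [Real.norm_eq_abs]
      have hval : G (m + s • v) - G (m + s • (-v)) - 2 * s * H m =
          (G (m + s • v) - G m - s * D1 G v m) -
          (G (m + s • (-v)) - G m - s * -(D1 G v m)) := by
        simp only [hHdef]
        ring
      rw [hval]
      calc |_ - _| ≤ |G (m + s • v) - G m - s * D1 G v m| +
            |G (m + s • (-v)) - G m - s * -(D1 G v m)| := abs_sub _ _
        _ ≤ K * ‖v‖ + K * ‖v‖ := add_le_add h1 (by simpa [norm_neg] using h2)
        _ = 2 * (K * ‖v‖) := by ring
    have := (convex_Icc (-1:ℝ) 1).norm_image_sub_le_of_norm_hasDerivWithin_le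
      hder hbnd zero_mem_Icc ht
    have h0 : b 0 = 0 := by simp [hbdef]; ring
    rw [h0, sub_zero, Real.norm_eq_abs, Real.norm_eq_abs] at this
    have ht1 : |t| ≤ 1 := abs_le.2 ⟨ht.1, ht.2⟩
    calc |g (m + t • v) + g (m + t • (-v)) - 2 * g m - t ^ 2 * H m| = |b t| := rfl
      _ ≤ 2 * (K * ‖v‖) * |t - 0| := this
      _ ≤ 2 * (K * ‖v‖) * 1 := by
          rw [sub_zero]
          apply mul_le_mul_of_nonneg_left ht1 (by positivity)
      _ = 2 * (K * ‖v‖) := by ring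
  -- outer
  set e : ℝ → ℝ := fun t => f (m + t • v) - f (m + t • (-v)) - t * (2 * g m)
    - t ^ 3 * ((1/3) * H m) with hedef
  have hder : ∀ t ∈ Icc (-1:ℝ) 1, HasDerivWithinAt e
      (g (m + t • v) + g (m + t • (-v)) - 2 * g m - t ^ 2 * H m) (Icc (-1) 1) t := by
    intro t ht
    have h1 := lineHasDeriv f hfd m v hseg ht
    have h2 := lineHasDeriv f hfd m (-v) hseg' ht
    have h3 : HasDerivWithinAt (fun t : ℝ => t * (2 * g m)) (2 * g m) (Icc (-1:ℝ) 1) t :=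
      (hasDerivAt_mul_const (2 * g m)).hasDerivWithinAt
    have h4 : HasDerivWithinAt (fun t : ℝ => t ^ 3 * ((1/3) * H m))
        (3 * t ^ 2 * ((1/3) * H m)) (Icc (-1:ℝ) 1) t := by
      have := (hasDerivAt_pow 3 t).mul_const ((1/3) * H m)
      simpa using this.hasDerivWithinAt
    have := ((h1.sub h2).sub h3).sub h4
    have hD : D1 f (-v) (m + t • (-v)) = -(g (m + t • (-v))) := by
      rw [hgdef, D1_neg]
    rw [hD] at this
    convert this using 1
    · rfl
    · rfl
    · rfl
    · ring
  have := (convex_Icc (-1:ℝ) 1).norm_image_sub_le_of_norm_hasDerivWithin_le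
    hder (fun t ht => by rw [Real.norm_eq_abs]; exact hbbound t ht)
    zero_mem_Icc one_mem_Icc
  have h0 : e 0 = 0 := by simp [hedef]
  rw [h0, sub_zero, Real.norm_eq_abs, Real.norm_eq_abs] at this
  have h1v : e 1 = f (m + v) - f (m - v) - 2 * D1 f v m - (1/3) * D1 (D1 (D1 f v) v) v m := by
    simp only [hedef, one_smul, smul_neg]
    rw [sub_eq_add_neg m v]
    ring_nf
    rfl
  rw [h1v] at this
  calc |f (m + v) - f (m - v) - 2 * D1 f v m - (1/3) * D1 (D1 (D1 f v) v) v m|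
      ≤ 2 * (K * ‖v‖) * |1 - 0| := this
    _ = 2 * K * ‖v‖ := by rw [show (1:ℝ) - 0 = 1 by norm_num, abs_one]; ring

/-- Bounded-and-Lipschitz on `Q2`. -/
def LB (f : ℝ × ℝ → ℝ) (K : ℝ) : Prop :=
  0 ≤ K ∧ (∀ p ∈ Q2, |f p| ≤ K) ∧ ∀ p ∈ Q2, ∀ q ∈ Q2, |f p - f q| ≤ K * ‖p - q‖

lemma LB.mul {f g : ℝ × ℝ → ℝ} {Kf Kg : ℝ} (hf : LB f Kf) (hg : LB g Kg) :
    LB (fun x => f x * g x) (2 * Kf * Kg) := by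
  obtain ⟨hKf, hbf, hlf⟩ := hf
  obtain ⟨hKg, hbg, hlg⟩ := hg
  refine ⟨by positivity, fun p hp => ?_, fun p hp q hq => ?_⟩
  · rw [abs_mul]
    nlinarith [hbf p hp, hbg p hp, abs_nonneg (f p), abs_nonneg (g p)]
  · have : f p * g p - f q * g q = f p * (g p - g q) + g q * (f p - f q) := by ring
    rw [this]
    calc |f p * (g p - g q) + g q * (f p - f q)|
        ≤ |f p * (g p - g q)| + |g q * (f p - f q)| := abs_add_le _ _
      _ = |f p| * |g p - g q| + |g q| * |f p - f q| := by rw [abs_mul, abs_mul]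
      _ ≤ Kf * (Kg * ‖p - q‖) + Kg * (Kf * ‖p - q‖) := by
          apply add_le_add
          · exact mul_le_mul (hbf p hp) (hlg p hp q hq) (abs_nonneg _) hKf
          · exact mul_le_mul (hbg q hq) (hlf p hp q hq) (abs_nonneg _) hKg
      _ = 2 * Kf * Kg * ‖p - q‖ := by ring

lemma LB.add {f g : ℝ × ℝ → ℝ} {Kf Kg : ℝ} (hf : LB f Kf) (hg : LB g Kg) :
    LB (fun x => f x + g x) (Kf + Kg) := by
  obtain ⟨hKf, hbf, hlf⟩ := hf
  obtain ⟨hKg, hbg, hlg⟩ := hg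
  refine ⟨by positivity, fun p hp => ?_, fun p hp q hq => ?_⟩
  · calc |f p + g p| ≤ |f p| + |g p| := abs_add_le _ _
      _ ≤ Kf + Kg := add_le_add (hbf p hp) (hbg p hp)
  · have : f p + g p - (f q + g q) = (f p - f q) + (g p - g q) := by ring
    rw [this]
    calc |(f p - f q) + (g p - g q)| ≤ |f p - f q| + |g p - g q| := abs_add_le _ _
      _ ≤ Kf * ‖p - q‖ + Kg * ‖p - q‖ := add_le_add (hlf p hp q hq) (hlg p hp q hq)
      _ = (Kf + Kg) * ‖p - q‖ := by ring

lemma LB.congr {f g : ℝ × ℝ → ℝ} {K : ℝ} (h : ∀ x ∈ Q2, f x = g x) (hf : LB f K) :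
    LB g K := by
  obtain ⟨hK, hb, hl⟩ := hf
  exact ⟨hK, fun p hp => (h p hp) ▸ hb p hp,
    fun p hp q hq => by rw [← h p hp, ← h q hq]; exact hl p hp q hq⟩

lemma lb_of_bound_lip {f : ℝ × ℝ → ℝ} {C K : ℝ}
    (hb : ∀ p ∈ Q2, |f p| ≤ C) (hK0 : 0 ≤ K)
    (hl : ∀ p ∈ Q2, ∀ q ∈ Q2, |f p - f q| ≤ K * ‖p - q‖) :
    LB f (max C K + 1) := by
  have h1 : (0:ℝ) ≤ max C K + 1 := by
    have : (0:ℝ) ≤ max C K := le_trans hK0 (le_max_right _ _)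
    linarith
  refine ⟨h1, fun p hp => ?_, fun p hp q hq => ?_⟩
  · calc |f p| ≤ C := hb p hp
      _ ≤ max C K + 1 := by have := le_max_left C K; linarith
  · calc |f p - f q| ≤ K * ‖p - q‖ := hl p hp q hq
      _ ≤ (max C K + 1) * ‖p - q‖ := by
          apply mul_le_mul_of_nonneg_right _ (norm_nonneg _)
          have := le_max_right C K; linarith

/-- Any `C^1` function on `Q2` is bounded and Lipschitz there. -/
lemma lb_of_cdo1 (f : ℝ × ℝ → ℝ) (hf : ContDiffOn ℝ 1 f Q2) : ∃ K, LB f K := by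
  obtain ⟨M, hM⟩ := q2_compact.exists_bound_of_continuousOn
    (hf.continuousOn_fderivWithin q2_unique le_rfl)
  obtain ⟨C, hC⟩ := q2_compact.exists_bound_of_continuousOn hf.continuousOn
  have hM0 : 0 ≤ max M 0 := le_max_right _ _
  refine ⟨max C 0 ⊔ max M 0 + 1, ?_⟩
  have hlip : ∀ p ∈ Q2, ∀ q ∈ Q2, |f p - f q| ≤ max M 0 * ‖p - q‖ := by
    intro p hp q hq
    rw [← Real.norm_eq_abs]
    exact q2_convex.norm_image_sub_le_of_norm_fderivWithin_le
      (hf.differentiableOn one_ne_zero)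
      (fun x hx => le_trans (hM x hx) (le_max_left _ _)) hq hp
  have hbd : ∀ p ∈ Q2, |f p| ≤ max C 0 := fun p hp =>
    le_trans (by rw [← Real.norm_eq_abs]; exact hC p hp) (le_max_left _ _)
  exact lb_of_bound_lip hbd hM0 hlip

/-- second directional derivative equals the second iterated derivative applied. -/
lemma dd_eq_iFD2 (f : ℝ × ℝ → ℝ) (hf : ContDiffOn ℝ 2 f Q2) (v₁ v₂ : ℝ × ℝ)
    {x : ℝ × ℝ} (hx : x ∈ Q2) :
    D1 (D1 f v₁) v₂ x = iteratedFDerivWithin ℝ 2 f Q2 x ![v₂, v₁] := by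
  rw [iteratedFDerivWithin_two_apply f q2_unique hx]
  simp only [Matrix.cons_val_zero, Matrix.cons_val_one, Matrix.head_cons]
  have hdiff : DifferentiableWithinAt ℝ (fderivWithin ℝ f Q2) Q2 x :=
    ((hf.fderivWithin q2_unique (by norm_num : (1:WithTop ℕ∞) + 1 ≤ 2)).differentiableOn one_ne_zero) x hx
  have hcomp := ((ContinuousLinearMap.apply ℝ ℝ v₁).hasFDerivAt.comp_hasFDerivWithinAt
    x hdiff.hasFDerivWithinAt).fderivWithin (q2_unique x hx)
  have heq : (fun y => (ContinuousLinearMap.apply ℝ ℝ v₁) (fderivWithin ℝ f Q2 y)) =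
      D1 f v₁ := by
    funext y; simp [D1, ContinuousLinearMap.apply_apply]
  rw [Function.comp_def, heq] at hcomp
  have : D1 (D1 f v₁) v₂ x = (fderivWithin ℝ (D1 f v₁) Q2 x) v₂ := rfl
  rw [this, hcomp]
  simp [ContinuousLinearMap.apply_apply]

lemma D2_smul (f : ℝ × ℝ → ℝ) (c : ℝ) (v w : ℝ × ℝ)
    (hg : DifferentiableOn ℝ (D1 f v) Q2) {x : ℝ × ℝ} (hx : x ∈ Q2) :
    D1 (D1 f (c • v)) (c • w) x = c * (c * D1 (D1 f v) w x) := by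
  have h1 : D1 f (c • v) = fun y => c * D1 f v y := D1_smul f c v
  have : D1 (D1 f (c • v)) (c • w) x =
      (fderivWithin ℝ (fun y => c * D1 f v y) Q2 x) (c • w) := by
    rw [D1, h1]
  rw [this, fderivWithin_const_mul (q2_unique x hx) (hg x hx) c]
  simp [smul_eq_mul, map_smul]
  exact Or.inl rfl

lemma D3_smul (f : ℝ × ℝ → ℝ) (c : ℝ) (v : ℝ × ℝ)
    (hg : DifferentiableOn ℝ (D1 f v) Q2)
    (hG : DifferentiableOn ℝ (D1 (D1 f v) v) Q2) {x : ℝ × ℝ} (hx : x ∈ Q2) :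
    D1 (D1 (D1 f (c • v)) (c • v)) (c • v) x = c * (c * (c * D1 (D1 (D1 f v) v) v x)) := by
  have h2 : ∀ y ∈ Q2, D1 (D1 f (c • v)) (c • v) y = c * (c * D1 (D1 f v) v y) :=
    fun y hy => D2_smul f c v v hg hy
  have hstep : D1 (D1 (D1 f (c • v)) (c • v)) (c • v) x =
      fderivWithin ℝ (fun y => c * (c * D1 (D1 f v) v y)) Q2 x (c • v) := by
    rw [D1, fderivWithin_congr' (fun y hy => h2 y hy) hx]
  rw [hstep]
  have hd : DifferentiableWithinAt ℝ (fun y => c * D1 (D1 f v) v y) Q2 x :=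
    (hG x hx).const_mul c
  rw [fderivWithin_const_mul (q2_unique x hx) hd c]
  rw [fderivWithin_const_mul (q2_unique x hx) (hG x hx) c]
  simp [smul_eq_mul, map_smul]
  exact Or.inl rfl

lemma psi_d2_LB (a u : ℝ × ℝ → ℝ) (ha : C21On a Q2) (hu : ContDiffOn ℝ 4 u Q2)
    (d' v₁ v₂ : ℝ × ℝ) :
    ∃ K, LB (D1 (D1 (fun x => a x * D1 u d' x) v₁) v₂) K := by
  set u1 := D1 u d' with hu1def
  have hu1 : ContDiffOn ℝ 3 u1 Q2 := D1_cdo hu (by norm_num) d'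
  have ha2 : ContDiffOn ℝ 2 a Q2 := ha.1
  have hadiff : DifferentiableOn ℝ a Q2 := ha2.differentiableOn (by norm_num)
  have hu1diff : DifferentiableOn ℝ u1 Q2 := hu1.differentiableOn (by norm_num)
  have hDa1 : ContDiffOn ℝ 1 (D1 a v₁) Q2 := D1_cdo ha2 (by norm_num) v₁
  have hDa2 : ContDiffOn ℝ 1 (D1 a v₂) Q2 := D1_cdo ha2 (by norm_num) v₂
  have hDu11 : ContDiffOn ℝ 2 (D1 u1 v₁) Q2 := D1_cdo hu1 (by norm_num) v₁
  have hDu12 : ContDiffOn ℝ 2 (D1 u1 v₂) Q2 := D1_cdo hu1 (by norm_num) v₂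
  have hDDu1 : ContDiffOn ℝ 1 (D1 (D1 u1 v₁) v₂) Q2 := D1_cdo hDu11 (by norm_num) v₂
  have step1 : ∀ y ∈ Q2, D1 (fun x => a x * u1 x) v₁ y
      = a y * D1 u1 v₁ y + u1 y * D1 a v₁ y := by
    intro y hy
    have hmul := fderivWithin_mul (q2_unique y hy) (hadiff y hy) (hu1diff y hy)
    have : D1 (fun x => a x * u1 x) v₁ y
        = (fderivWithin ℝ (fun t => a t * u1 t) Q2 y) v₁ := rfl
    rw [this, show (fun t => a t * u1 t) = a * u1 from rfl, hmul]
    simp [D1, smul_eq_mul]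
  have step2 : ∀ x ∈ Q2, D1 (D1 (fun x => a x * u1 x) v₁) v₂ x =
      a x * D1 (D1 u1 v₁) v₂ x + D1 u1 v₁ x * D1 a v₂ x
      + u1 x * D1 (D1 a v₁) v₂ x + D1 a v₁ x * D1 u1 v₂ x := by
    intro x hx
    have hcong : D1 (D1 (fun x => a x * u1 x) v₁) v₂ x =
        fderivWithin ℝ (fun y => a y * D1 u1 v₁ y + u1 y * D1 a v₁ y) Q2 x v₂ := by
      have : D1 (D1 (fun x => a x * u1 x) v₁) v₂ x
          = (fderivWithin ℝ (D1 (fun x => a x * u1 x) v₁) Q2 x) v₂ := rfl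
      rw [this, fderivWithin_congr' (fun y hy => step1 y hy) hx]
    rw [hcong]
    have dA : DifferentiableWithinAt ℝ (fun y => a y * D1 u1 v₁ y) Q2 x :=
      (hadiff x hx).mul ((hDu11.differentiableOn (by norm_num)) x hx)
    have dB : DifferentiableWithinAt ℝ (fun y => u1 y * D1 a v₁ y) Q2 x :=
      (hu1diff x hx).mul ((hDa1.differentiableOn (by norm_num)) x hx)
    rw [show (fun y => a y * D1 u1 v₁ y + u1 y * D1 a v₁ y)
      = (fun y => a y * D1 u1 v₁ y) + (fun y => u1 y * D1 a v₁ y) from rfl,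
      fderivWithin_add (q2_unique x hx) dA dB]
    rw [ContinuousLinearMap.add_apply]
    rw [show (fun y => a y * D1 u1 v₁ y) = a * D1 u1 v₁ from rfl,
      show (fun y => u1 y * D1 a v₁ y) = u1 * D1 a v₁ from rfl]
    rw [fderivWithin_mul (q2_unique x hx) (hadiff x hx)
      ((hDu11.differentiableOn (by norm_num)) x hx)]
    rw [fderivWithin_mul (q2_unique x hx) (hu1diff x hx)
      ((hDa1.differentiableOn (by norm_num)) x hx)]
    simp [D1, smul_eq_mul]
    ring
  obtain ⟨Ka, hKa⟩ := lb_of_cdo1 a (ha2.of_le (by norm_num))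
  obtain ⟨Ku1, hKu1⟩ := lb_of_cdo1 u1 (hu1.of_le (by norm_num))
  obtain ⟨K2, h2⟩ := lb_of_cdo1 _ hDa1
  obtain ⟨K3, h3⟩ := lb_of_cdo1 _ hDa2
  obtain ⟨K4, h4⟩ := lb_of_cdo1 _ (hDu11.of_le (by norm_num))
  obtain ⟨K5, h5⟩ := lb_of_cdo1 _ (hDu12.of_le (by norm_num))
  obtain ⟨K6, h6⟩ := lb_of_cdo1 _ hDDu1
  -- LB for the second derivative of a
  obtain ⟨Cd, hCd⟩ := q2_compact.exists_bound_of_continuousOn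
    ((D1_cdo (n := 0) hDa1 (by norm_num) v₂).continuousOn)
  obtain ⟨KL, hKL⟩ := ha.2
  have hDDa_lip : ∀ p ∈ Q2, ∀ q ∈ Q2, |D1 (D1 a v₁) v₂ p - D1 (D1 a v₁) v₂ q|
      ≤ ((KL : ℝ) * (‖v₂‖ * ‖v₁‖)) * ‖p - q‖ := by
    intro p hp q hq
    rw [dd_eq_iFD2 a ha2 v₁ v₂ hp, dd_eq_iFD2 a ha2 v₁ v₂ hq]
    have hsub : iteratedFDerivWithin ℝ 2 a Q2 p ![v₂, v₁]
        - iteratedFDerivWithin ℝ 2 a Q2 q ![v₂, v₁]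
        = (iteratedFDerivWithin ℝ 2 a Q2 p - iteratedFDerivWithin ℝ 2 a Q2 q) ![v₂, v₁] := by
      simp [ContinuousMultilinearMap.sub_apply]
    rw [hsub, ← Real.norm_eq_abs]
    calc ‖(iteratedFDerivWithin ℝ 2 a Q2 p - iteratedFDerivWithin ℝ 2 a Q2 q) ![v₂, v₁]‖
        ≤ ‖iteratedFDerivWithin ℝ 2 a Q2 p - iteratedFDerivWithin ℝ 2 a Q2 q‖
          * (‖v₂‖ * ‖v₁‖) := by
          have := (iteratedFDerivWithin ℝ 2 a Q2 p
            - iteratedFDerivWithin ℝ 2 a Q2 q).le_opNorm ![v₂, v₁]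
          simpa [Fin.prod_univ_two, mul_assoc] using this
      _ ≤ ((KL : ℝ) * ‖p - q‖) * (‖v₂‖ * ‖v₁‖) := by
          apply mul_le_mul_of_nonneg_right _ (by positivity)
          have := hKL.dist_le_mul p hp q hq
          rw [dist_eq_norm, dist_eq_norm] at this
          exact this
      _ = ((KL : ℝ) * (‖v₂‖ * ‖v₁‖)) * ‖p - q‖ := by ring
  have hDDa : LB (D1 (D1 a v₁) v₂) (max Cd ((KL : ℝ) * (‖v₂‖ * ‖v₁‖)) + 1) :=
    lb_of_bound_lip (fun p hp => by rw [← Real.norm_eq_abs]; exact hCd p hp)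
      (by positivity) hDDa_lip
  have hsum : LB (fun x => a x * D1 (D1 u1 v₁) v₂ x + D1 u1 v₁ x * D1 a v₂ x
      + u1 x * D1 (D1 a v₁) v₂ x + D1 a v₁ x * D1 u1 v₂ x)
      (2 * Ka * K6 + 2 * K4 * K3 + 2 * Ku1 * (Cd ⊔ (KL : ℝ) * (‖v₂‖ * ‖v₁‖) + 1)
        + 2 * K2 * K5) := by
    have l12 := (hKa.mul h6).add (h4.mul h3)
    have l123 := l12.add (hKu1.mul hDDa)
    have l := l123.add (h2.mul h5)
    exact l.congr (fun x hx => rfl)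
  exact ⟨_, LB.congr (fun x hx => (step2 x hx).symm) hsum⟩

lemma assemble (h : ℝ) (hh : 0 < h) (Ka ru rf rg rx : ℝ) (hKa0 : 0 ≤ Ka)
    (A1 A2 A3 A4 d1 d2 d3 d4 U11 U12 U13 U14 U31 U32 U33 U34 Pp Pm Pz : ℝ)
    (hA1 : |A1| ≤ Ka) (hA2 : |A2| ≤ Ka) (hA3 : |A3| ≤ Ka) (hA4 : |A4| ≤ Ka)
    (h1 : |d1 - (h * U11 + h^3/24 * U31)| ≤ ru)
    (h2 : |d2 - (h * U12 + h^3/24 * U32)| ≤ ru)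
    (h3 : |d3 - (h * U13 + h^3/24 * U33)| ≤ ru)
    (h4 : |d4 - (h * U14 + h^3/24 * U34)| ≤ ru)
    (hFp : |A1 * U11 - A2 * U12 - h * Pp| ≤ rf)
    (hFm : |A3 * U13 - A4 * U14 - h * Pm| ≤ rf)
    (hG : |Pp + Pm - 2 * Pz| ≤ rg)
    (hX1 : |A1 * U31 - A2 * U32| ≤ rx) (hX2 : |A3 * U33 - A4 * U34| ≤ rx) :
    |1/(2*h^2) * (A1 * d1 - A2 * d2 + A3 * d3 - A4 * d4) - Pz|
      ≤ 1/(2*h^2) * (Ka * ru * 4 + h * (rf + rf) + h^2 * rg + h^3/24 * (rx + rx)) := by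
  have key : A1 * d1 - A2 * d2 + A3 * d3 - A4 * d4 - 2*h^2*Pz =
      (A1 * (d1 - (h * U11 + h^3/24 * U31)) - A2 * (d2 - (h * U12 + h^3/24 * U32))
        + A3 * (d3 - (h * U13 + h^3/24 * U33)) - A4 * (d4 - (h * U14 + h^3/24 * U34)))
      + (h * ((A1 * U11 - A2 * U12 - h * Pp) + (A3 * U13 - A4 * U14 - h * Pm))
      + (h^2 * (Pp + Pm - 2 * Pz)
      + h^3/24 * ((A1 * U31 - A2 * U32) + (A3 * U33 - A4 * U34)))) := by ring
  have hW1 : |A1 * (d1 - (h * U11 + h^3/24 * U31)) - A2 * (d2 - (h * U12 + h^3/24 * U32))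
      + A3 * (d3 - (h * U13 + h^3/24 * U33)) - A4 * (d4 - (h * U14 + h^3/24 * U34))|
      ≤ Ka * ru * 4 := by
    have e1 : |A1 * (d1 - (h * U11 + h^3/24 * U31))| ≤ Ka * ru := by
      rw [abs_mul]; exact mul_le_mul hA1 h1 (abs_nonneg _) hKa0
    have e2 : |A2 * (d2 - (h * U12 + h^3/24 * U32))| ≤ Ka * ru := by
      rw [abs_mul]; exact mul_le_mul hA2 h2 (abs_nonneg _) hKa0
    have e3 : |A3 * (d3 - (h * U13 + h^3/24 * U33))| ≤ Ka * ru := by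
      rw [abs_mul]; exact mul_le_mul hA3 h3 (abs_nonneg _) hKa0
    have e4 : |A4 * (d4 - (h * U14 + h^3/24 * U34))| ≤ Ka * ru := by
      rw [abs_mul]; exact mul_le_mul hA4 h4 (abs_nonneg _) hKa0
    calc |A1 * (d1 - (h * U11 + h^3/24 * U31)) - A2 * (d2 - (h * U12 + h^3/24 * U32))
        + A3 * (d3 - (h * U13 + h^3/24 * U33)) - A4 * (d4 - (h * U14 + h^3/24 * U34))|
        ≤ |A1 * (d1 - (h * U11 + h^3/24 * U31)) - A2 * (d2 - (h * U12 + h^3/24 * U32))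
          + A3 * (d3 - (h * U13 + h^3/24 * U33))| + |A4 * (d4 - (h * U14 + h^3/24 * U34))| :=
          abs_sub _ _
      _ ≤ (|A1 * (d1 - (h * U11 + h^3/24 * U31)) - A2 * (d2 - (h * U12 + h^3/24 * U32))|
          + |A3 * (d3 - (h * U13 + h^3/24 * U33))|) + |A4 * (d4 - (h * U14 + h^3/24 * U34))| :=
          add_le_add_left (abs_add_le _ _) _
      _ ≤ ((|A1 * (d1 - (h * U11 + h^3/24 * U31))| + |A2 * (d2 - (h * U12 + h^3/24 * U32))|)
          + |A3 * (d3 - (h * U13 + h^3/24 * U33))|) + |A4 * (d4 - (h * U14 + h^3/24 * U34))| :=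
          add_le_add_left (add_le_add_left (abs_sub _ _) _) _
      _ ≤ ((Ka * ru + Ka * ru) + Ka * ru) + Ka * ru := by
          exact add_le_add (add_le_add (add_le_add e1 e2) e3) e4
      _ = Ka * ru * 4 := by ring
  have hW2 : |h * ((A1 * U11 - A2 * U12 - h * Pp) + (A3 * U13 - A4 * U14 - h * Pm))|
      ≤ h * (rf + rf) := by
    rw [abs_mul, abs_of_pos hh]
    exact mul_le_mul_of_nonneg_left ((abs_add_le _ _).trans (add_le_add hFp hFm)) hh.le
  have hW3 : |h^2 * (Pp + Pm - 2 * Pz)| ≤ h^2 * rg := by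
    rw [abs_mul, abs_of_pos (by positivity : (0:ℝ) < h^2)]
    exact mul_le_mul_of_nonneg_left hG (by positivity)
  have hW4 : |h^3/24 * ((A1 * U31 - A2 * U32) + (A3 * U33 - A4 * U34))|
      ≤ h^3/24 * (rx + rx) := by
    rw [abs_mul, abs_of_pos (by positivity : (0:ℝ) < h^3/24)]
    exact mul_le_mul_of_nonneg_left ((abs_add_le _ _).trans (add_le_add hX1 hX2)) (by positivity)
  have hT : |A1 * d1 - A2 * d2 + A3 * d3 - A4 * d4 - 2*h^2*Pz|
      ≤ Ka * ru * 4 + h * (rf + rf) + h^2 * rg + h^3/24 * (rx + rx) := by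
    rw [key]
    set W1 := A1 * (d1 - (h * U11 + h^3/24 * U31)) - A2 * (d2 - (h * U12 + h^3/24 * U32))
        + A3 * (d3 - (h * U13 + h^3/24 * U33)) - A4 * (d4 - (h * U14 + h^3/24 * U34)) with hW1d
    set W2 := h * ((A1 * U11 - A2 * U12 - h * Pp) + (A3 * U13 - A4 * U14 - h * Pm)) with hW2d
    set W3 := h^2 * (Pp + Pm - 2 * Pz) with hW3d
    set W4 := h^3/24 * ((A1 * U31 - A2 * U32) + (A3 * U33 - A4 * U34)) with hW4d
    calc |W1 + (W2 + (W3 + W4))| ≤ |W1| + |W2 + (W3 + W4)| := abs_add_le _ _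
      _ ≤ |W1| + (|W2| + |W3 + W4|) := add_le_add_right (abs_add_le _ _) _
      _ ≤ |W1| + (|W2| + (|W3| + |W4|)) := add_le_add_right (add_le_add_right (abs_add_le _ _) _) _
      _ ≤ Ka * ru * 4 + (h * (rf + rf) + (h^2 * rg + h^3/24 * (rx + rx))) :=
          add_le_add hW1 (add_le_add hW2 (add_le_add hW3 hW4))
      _ = Ka * ru * 4 + h * (rf + rf) + h^2 * rg + h^3/24 * (rx + rx) := by ring
  have hfac : 1/(2*h^2) * (A1 * d1 - A2 * d2 + A3 * d3 - A4 * d4) - Pz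
      = 1/(2*h^2) * (A1 * d1 - A2 * d2 + A3 * d3 - A4 * d4 - 2*h^2*Pz) := by
    field_simp
  rw [hfac, abs_mul, abs_of_pos (by positivity : (0:ℝ) < 1/(2*h^2))]
  exact mul_le_mul_of_nonneg_left hT (by positivity)

set_option maxHeartbeats 2000000 in
lemma half_est (a u : ℝ × ℝ → ℝ) (ha : C21On a Q2) (hu : ContDiffOn ℝ 4 u Q2) (d d' : ℝ × ℝ) :
    ∃ C, 0 < C ∧ ∀ h : ℝ, 0 < h → ∀ z : ℝ × ℝ,
      (∀ α β : ℝ, |α| ≤ 1 → |β| ≤ 1 → z + (α * h) • d + (β * h) • d' ∈ Q2) →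
      |(1 / (2 * h ^ 2)) *
          (a (z + h • d + (h / 2) • d') * (u (z + h • d + h • d') - u (z + h • d))
            - a (z + (h / 2) • d') * (u (z + h • d') - u z)
            + a (z - (h / 2) • d') * (u z - u (z - h • d'))
            - a (z - h • d - (h / 2) • d') * (u (z - h • d) - u (z - h • d - h • d')))
        - D1 (fun w => a w * D1 u d' w) d z| ≤ C * h ^ 2 := by
  have ha2 : ContDiffOn ℝ 2 a Q2 := ha.1
  have hu1cd : ContDiffOn ℝ 3 (D1 u d') Q2 := D1_cdo hu (by norm_num) d'
  have hu2cd : ContDiffOn ℝ 2 (D1 (D1 u d') d') Q2 := D1_cdo hu1cd (by norm_num) d'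
  have hu3cd : ContDiffOn ℝ 1 (D1 (D1 (D1 u d') d') d') Q2 := D1_cdo hu2cd (by norm_num) d'
  have hud : DifferentiableOn ℝ u Q2 := hu.differentiableOn (by norm_num)
  have hU1d : DifferentiableOn ℝ (D1 u d') Q2 := hu1cd.differentiableOn (by norm_num)
  have hU2d : DifferentiableOn ℝ (D1 (D1 u d') d') Q2 := hu2cd.differentiableOn (by norm_num)
  have hψcd : ContDiffOn ℝ 2 (fun w => a w * D1 u d' w) Q2 :=
    ha2.mul (hu1cd.of_le (by norm_num))
  have hψd : DifferentiableOn ℝ (fun w => a w * D1 u d' w) Q2 :=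
    hψcd.differentiableOn (by norm_num)
  have hPd : DifferentiableOn ℝ (D1 (fun w => a w * D1 u d' w) d) Q2 :=
    (D1_cdo hψcd (by norm_num) d).differentiableOn one_ne_zero
  obtain ⟨Ka, hKa⟩ := lb_of_cdo1 a (ha2.of_le (by norm_num))
  obtain ⟨KU, hKU⟩ := lb_of_cdo1 _ hu3cd
  obtain ⟨K1, hK1⟩ := psi_d2_LB a u ha hu d' d d
  obtain ⟨K2, hK2⟩ := psi_d2_LB a u ha hu d' d (d + d')
  have hKa0 : 0 ≤ Ka := hKa.1
  have hKU0 : 0 ≤ KU := hKU.1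
  have hK10 : 0 ≤ K1 := hK1.1
  have hK20 : 0 ≤ K2 := hK2.1
  set B : ℝ := Ka * KU * ‖d'‖ / 2 + K1 * ‖d‖ / 2 + K2 * (‖d‖ + ‖d'‖) / 2
      + Ka * KU * ‖d‖ / 6 with hBdef
  have hB0 : 0 ≤ B := by positivity
  refine ⟨B / 2 + 1, by positivity, ?_⟩
  intro h hh z hmem
  have hh2 : (0:ℝ) < h / 2 := by linarith
  -- memberships of the stencil points along needed segments
  have hmem' : ∀ α β : ℝ, -1 ≤ α → α ≤ 1 → -1 ≤ β → β ≤ 1 →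
      z + (α * h) • d + (β * h) • d' ∈ Q2 := by
    intro α β h1 h2 h3 h4
    exact hmem α β (abs_le.2 ⟨h1, h2⟩) (abs_le.2 ⟨h3, h4⟩)
  have hseg1 : ∀ t ∈ Icc (-1:ℝ) 1,
      (z + h • d + (h/2) • d') + t • ((h/2) • d') ∈ Q2 := by
    intro t ht
    have : (z + h • d + (h/2) • d') + t • ((h/2) • d')
        = z + ((1:ℝ) * h) • d + (((1+t)/2) * h) • d' := by module
    rw [this]
    exact hmem' 1 ((1+t)/2) (by norm_num) (by norm_num)
      (by linarith [ht.1]) (by linarith [ht.2])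
  have hseg2 : ∀ t ∈ Icc (-1:ℝ) 1, (z + (h/2) • d') + t • ((h/2) • d') ∈ Q2 := by
    intro t ht
    have : (z + (h/2) • d') + t • ((h/2) • d')
        = z + ((0:ℝ) * h) • d + (((1+t)/2) * h) • d' := by module
    rw [this]
    exact hmem' 0 ((1+t)/2) (by norm_num) (by norm_num)
      (by linarith [ht.1]) (by linarith [ht.2])
  have hseg3 : ∀ t ∈ Icc (-1:ℝ) 1, (z - (h/2) • d') + t • ((h/2) • d') ∈ Q2 := by
    intro t ht
    have : (z - (h/2) • d') + t • ((h/2) • d')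
        = z + ((0:ℝ) * h) • d + (((t-1)/2) * h) • d' := by module
    rw [this]
    exact hmem' 0 ((t-1)/2) (by norm_num) (by norm_num)
      (by linarith [ht.1]) (by linarith [ht.2])
  have hseg4 : ∀ t ∈ Icc (-1:ℝ) 1,
      (z - h • d - (h/2) • d') + t • ((h/2) • d') ∈ Q2 := by
    intro t ht
    have : (z - h • d - (h/2) • d') + t • ((h/2) • d')
        = z + ((-1:ℝ) * h) • d + (((t-1)/2) * h) • d' := by module
    rw [this]
    exact hmem' (-1) ((t-1)/2) (by norm_num) (by norm_num)
      (by linarith [ht.1]) (by linarith [ht.2])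
  have hsegcp : ∀ t ∈ Icc (-1:ℝ) 1,
      (z + ((h/2) • d + (h/2) • d')) + t • ((h/2) • d) ∈ Q2 := by
    intro t ht
    have : (z + ((h/2) • d + (h/2) • d')) + t • ((h/2) • d)
        = z + (((1+t)/2) * h) • d + (((1:ℝ)/2) * h) • d' := by module
    rw [this]
    exact hmem' ((1+t)/2) (1/2) (by linarith [ht.1]) (by linarith [ht.2])
      (by norm_num) (by norm_num)
  have hsegcm : ∀ t ∈ Icc (-1:ℝ) 1,
      (z - ((h/2) • d + (h/2) • d')) + t • ((h/2) • d) ∈ Q2 := by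
    intro t ht
    have : (z - ((h/2) • d + (h/2) • d')) + t • ((h/2) • d)
        = z + (((t-1)/2) * h) • d + ((-(1:ℝ)/2) * h) • d' := by module
    rw [this]
    exact hmem' ((t-1)/2) (-1/2) (by linarith [ht.1]) (by linarith [ht.2])
      (by norm_num) (by norm_num)
  have hsegz : ∀ t ∈ Icc (-1:ℝ) 1, z + t • ((h/2) • d + (h/2) • d') ∈ Q2 := by
    intro t ht
    have : z + t • ((h/2) • d + (h/2) • d')
        = z + ((t/2) * h) • d + ((t/2) * h) • d' := by module
    rw [this]
    exact hmem' (t/2) (t/2) (by linarith [ht.1]) (by linarith [ht.2])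
      (by linarith [ht.1]) (by linarith [ht.2])
  have hm1 : z + h • d + (h/2) • d' ∈ Q2 := by simpa using hseg1 0 zero_mem_Icc
  have hm2 : z + (h/2) • d' ∈ Q2 := by simpa using hseg2 0 zero_mem_Icc
  have hm3 : z - (h/2) • d' ∈ Q2 := by simpa using hseg3 0 zero_mem_Icc
  have hm4 : z - h • d - (h/2) • d' ∈ Q2 := by simpa using hseg4 0 zero_mem_Icc
  have hz : z ∈ Q2 := by simpa using hsegz 0 zero_mem_Icc
  have hcp : z + ((h/2) • d + (h/2) • d') ∈ Q2 := by simpa using hsegcp 0 zero_mem_Icc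
  have hcm : z - ((h/2) • d + (h/2) • d') ∈ Q2 := by simpa using hsegcm 0 zero_mem_Icc
  have hnd' : ‖(h/2) • d'‖ = h/2 * ‖d'‖ := by
    rw [norm_smul, Real.norm_eq_abs, abs_of_pos hh2]
  have hnd : ‖(h/2) • d‖ = h/2 * ‖d‖ := by
    rw [norm_smul, Real.norm_eq_abs, abs_of_pos hh2]
  -- Step A : third-order expansions of u at the four midpoints
  have hKE1 : ∀ p ∈ Q2, ∀ q ∈ Q2,
      |D1 (D1 (D1 u ((h/2) • d')) ((h/2) • d')) ((h/2) • d') p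
        - D1 (D1 (D1 u ((h/2) • d')) ((h/2) • d')) ((h/2) • d') q|
      ≤ ((h/2)^3 * KU) * ‖p - q‖ := by
    intro p hp q hq
    rw [D3_smul u (h/2) d' hU1d hU2d hp, D3_smul u (h/2) d' hU1d hU2d hq]
    have hlip := hKU.2.2 p hp q hq
    have heq : h/2*(h/2*(h/2* D1 (D1 (D1 u d') d') d' p))
        - h/2*(h/2*(h/2* D1 (D1 (D1 u d') d') d' q))
        = (h/2)^3 * (D1 (D1 (D1 u d') d') d' p - D1 (D1 (D1 u d') d') d' q) := by ring
    rw [heq, abs_mul, abs_of_pos (by positivity : (0:ℝ) < (h/2)^3)]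
    calc (h/2)^3 * |D1 (D1 (D1 u d') d') d' p - D1 (D1 (D1 u d') d') d' q|
        ≤ (h/2)^3 * (KU * ‖p - q‖) := by
          apply mul_le_mul_of_nonneg_left hlip (by positivity)
      _ = ((h/2)^3 * KU) * ‖p - q‖ := by ring
  have hgd4 : DifferentiableOn ℝ (D1 u ((h/2) • d')) Q2 := by
    rw [D1_smul u (h/2) d']
    exact hU1d.const_mul (h/2)
  have hGd4 : DifferentiableOn ℝ (D1 (D1 u ((h/2) • d')) ((h/2) • d')) Q2 := by
    apply DifferentiableOn.congr ((hU2d.const_mul (h/2)).const_mul (h/2))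
    intro x hx
    exact D2_smul u (h/2) d' d' hU1d hx
  have hdelta : ∀ m : ℝ × ℝ, m ∈ Q2 →
      (∀ t ∈ Icc (-1:ℝ) 1, m + t • ((h/2) • d') ∈ Q2) →
      |u (m + (h/2) • d') - u (m - (h/2) • d')
        - (h * D1 u d' m + h^3/24 * D1 (D1 (D1 u d') d') d' m)|
      ≤ KU * ‖d'‖/8 * h^4 := by
    intro m hm hseg
    have h0 := est4 u ((h/2) • d') ((h/2)^3 * KU) (by positivity) hud hgd4 hGd4 hKE1 m hseg
    rw [D3_smul u (h/2) d' hU1d hU2d hm, hnd'] at h0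
    simp only [D1_smul u (h/2) d'] at h0
    have harg : u (m + (h/2) • d') - u (m - (h/2) • d')
        - (h * D1 u d' m + h^3/24 * D1 (D1 (D1 u d') d') d' m)
        = u (m + (h/2) • d') - u (m - (h/2) • d') - 2 * (h/2 * D1 u d' m)
          - 1/3 * (h/2*(h/2*(h/2* D1 (D1 (D1 u d') d') d' m))) := by ring
    rw [harg]
    calc _ ≤ 2 * ((h/2)^3 * KU) * (h/2 * ‖d'‖) := h0
      _ = KU * ‖d'‖/8 * h^4 := by ring
  have hδ1 := hdelta _ hm1 hseg1
  have hδ2 := hdelta _ hm2 hseg2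
  have hδ3 := hdelta _ hm3 hseg3
  have hδ4 := hdelta _ hm4 hseg4
  -- Step B : centered differences of ψ = a · ∂u
  have hKE2 : ∀ p ∈ Q2, ∀ q ∈ Q2,
      |D1 (D1 (fun w => a w * D1 u d' w) ((h/2) • d)) ((h/2) • d) p
        - D1 (D1 (fun w => a w * D1 u d' w) ((h/2) • d)) ((h/2) • d) q|
      ≤ ((h/2)^2 * K1) * ‖p - q‖ := by
    intro p hp q hq
    rw [D2_smul (fun w => a w * D1 u d' w) (h/2) d d hPd hp,
      D2_smul (fun w => a w * D1 u d' w) (h/2) d d hPd hq]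
    have hlip := hK1.2.2 p hp q hq
    have heq : h/2*(h/2* D1 (D1 (fun x => a x * D1 u d' x) d) d p)
        - h/2*(h/2* D1 (D1 (fun x => a x * D1 u d' x) d) d q)
        = (h/2)^2 * (D1 (D1 (fun x => a x * D1 u d' x) d) d p
            - D1 (D1 (fun x => a x * D1 u d' x) d) d q) := by ring
    rw [heq, abs_mul, abs_of_pos (by positivity : (0:ℝ) < (h/2)^2)]
    calc (h/2)^2 * |D1 (D1 (fun x => a x * D1 u d' x) d) d p
          - D1 (D1 (fun x => a x * D1 u d' x) d) d q|
        ≤ (h/2)^2 * (K1 * ‖p - q‖) := by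
          apply mul_le_mul_of_nonneg_left hlip (by positivity)
      _ = ((h/2)^2 * K1) * ‖p - q‖ := by ring
  have hgd2 : DifferentiableOn ℝ (D1 (fun w => a w * D1 u d' w) ((h/2) • d)) Q2 := by
    rw [D1_smul (fun w => a w * D1 u d' w) (h/2) d]
    exact hPd.const_mul (h/2)
  have hFp : |a (z + h • d + (h/2) • d') * D1 u d' (z + h • d + (h/2) • d')
      - a (z + (h/2) • d') * D1 u d' (z + (h/2) • d')
      - h * D1 (fun w => a w * D1 u d' w) d (z + ((h/2) • d + (h/2) • d'))|
      ≤ K1 * ‖d‖/4 * h^3 := by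
    have h0 := est2 (fun w => a w * D1 u d' w) ((h/2) • d) ((h/2)^2 * K1) (by positivity)
      hψd hgd2 hKE2 (z + ((h/2) • d + (h/2) • d')) hsegcp
    rw [show z + ((h/2) • d + (h/2) • d') + (h/2) • d = z + h • d + (h/2) • d' by module,
      show z + ((h/2) • d + (h/2) • d') - (h/2) • d = z + (h/2) • d' by module] at h0
    simp only [D1_smul (fun w => a w * D1 u d' w) (h/2) d] at h0
    have harg : a (z + h • d + (h/2) • d') * D1 u d' (z + h • d + (h/2) • d')
        - a (z + (h/2) • d') * D1 u d' (z + (h/2) • d')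
        - h * D1 (fun w => a w * D1 u d' w) d (z + ((h/2) • d + (h/2) • d'))
        = (fun w => a w * D1 u d' w) (z + h • d + (h/2) • d')
          - (fun w => a w * D1 u d' w) (z + (h/2) • d')
          - 2 * (h/2 * D1 (fun w => a w * D1 u d' w) d (z + ((h/2) • d + (h/2) • d'))) := by
      simp only []
      ring
    rw [harg]
    calc _ ≤ 2 * ((h/2)^2 * K1) * ‖(h/2) • d‖ := h0
      _ = K1 * ‖d‖/4 * h^3 := by rw [hnd]; ring
  have hFm : |a (z - (h/2) • d') * D1 u d' (z - (h/2) • d')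
      - a (z - h • d - (h/2) • d') * D1 u d' (z - h • d - (h/2) • d')
      - h * D1 (fun w => a w * D1 u d' w) d (z - ((h/2) • d + (h/2) • d'))|
      ≤ K1 * ‖d‖/4 * h^3 := by
    have h0 := est2 (fun w => a w * D1 u d' w) ((h/2) • d) ((h/2)^2 * K1) (by positivity)
      hψd hgd2 hKE2 (z - ((h/2) • d + (h/2) • d')) hsegcm
    rw [show z - ((h/2) • d + (h/2) • d') + (h/2) • d = z - (h/2) • d' by module,
      show z - ((h/2) • d + (h/2) • d') - (h/2) • d = z - h • d - (h/2) • d' by module] at h0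
    simp only [D1_smul (fun w => a w * D1 u d' w) (h/2) d] at h0
    have harg : a (z - (h/2) • d') * D1 u d' (z - (h/2) • d')
        - a (z - h • d - (h/2) • d') * D1 u d' (z - h • d - (h/2) • d')
        - h * D1 (fun w => a w * D1 u d' w) d (z - ((h/2) • d + (h/2) • d'))
        = (fun w => a w * D1 u d' w) (z - (h/2) • d')
          - (fun w => a w * D1 u d' w) (z - h • d - (h/2) • d')
          - 2 * (h/2 * D1 (fun w => a w * D1 u d' w) d (z - ((h/2) • d + (h/2) • d'))) := by
      simp only []
      ring
    rw [harg]
    calc _ ≤ 2 * ((h/2)^2 * K1) * ‖(h/2) • d‖ := h0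
      _ = K1 * ‖d‖/4 * h^3 := by rw [hnd]; ring
  -- Step C : averaging of the first derivative of ψ
  have hKE3 : ∀ p ∈ Q2, ∀ q ∈ Q2,
      |D1 (D1 (fun w => a w * D1 u d' w) d) ((h/2) • d + (h/2) • d') p
        - D1 (D1 (fun w => a w * D1 u d' w) d) ((h/2) • d + (h/2) • d') q|
      ≤ ((h/2) * K2) * ‖p - q‖ := by
    intro p hp q hq
    rw [show (h/2) • d + (h/2) • d' = (h/2) • (d + d') by module]
    simp only [D1_smul (D1 (fun w => a w * D1 u d' w) d) (h/2) (d + d')]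
    have hlip := hK2.2.2 p hp q hq
    have heq : h/2 * D1 (D1 (fun x => a x * D1 u d' x) d) (d + d') p
        - h/2 * D1 (D1 (fun x => a x * D1 u d' x) d) (d + d') q
        = (h/2) * (D1 (D1 (fun x => a x * D1 u d' x) d) (d + d') p
            - D1 (D1 (fun x => a x * D1 u d' x) d) (d + d') q) := by ring
    rw [heq, abs_mul, abs_of_pos hh2]
    calc _ ≤ (h/2) * (K2 * ‖p - q‖) := by
          apply mul_le_mul_of_nonneg_left hlip (by positivity)
      _ = ((h/2) * K2) * ‖p - q‖ := by ring
  have hG0 : |D1 (fun w => a w * D1 u d' w) d (z + ((h/2) • d + (h/2) • d'))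
      + D1 (fun w => a w * D1 u d' w) d (z - ((h/2) • d + (h/2) • d'))
      - 2 * D1 (fun w => a w * D1 u d' w) d z|
      ≤ K2 * (‖d‖ + ‖d'‖)/2 * h^2 := by
    have h0 := est3 (D1 (fun w => a w * D1 u d' w) d) ((h/2) • d + (h/2) • d')
      ((h/2) * K2) (by positivity) hPd hKE3 z hsegz
    have hwn : ‖(h/2) • d + (h/2) • d'‖ ≤ h/2 * (‖d‖ + ‖d'‖) := by
      calc ‖(h/2) • d + (h/2) • d'‖ ≤ ‖(h/2) • d‖ + ‖(h/2) • d'‖ := norm_add_le _ _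
        _ = h/2 * (‖d‖ + ‖d'‖) := by rw [hnd, hnd']; ring
    calc _ ≤ 2 * ((h/2) * K2) * ‖(h/2) • d + (h/2) • d'‖ := h0
      _ ≤ 2 * ((h/2) * K2) * (h/2 * (‖d‖ + ‖d'‖)) := by
          apply mul_le_mul_of_nonneg_left hwn (by positivity)
      _ = K2 * (‖d‖ + ‖d'‖)/2 * h^2 := by ring
  -- Step D : Lipschitz bound for χ = a · ∂³u
  have hχ := hKa.mul hKU
  have hX12 : |a (z + h • d + (h/2) • d') * D1 (D1 (D1 u d') d') d' (z + h • d + (h/2) • d')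
      - a (z + (h/2) • d') * D1 (D1 (D1 u d') d') d' (z + (h/2) • d')|
      ≤ 2 * Ka * KU * (h * ‖d‖) := by
    have h0 := hχ.2.2 _ hm1 _ hm2
    simp only [] at h0
    calc _ ≤ 2 * Ka * KU * ‖(z + h • d + (h/2) • d') - (z + (h/2) • d')‖ := h0
      _ = 2 * Ka * KU * (h * ‖d‖) := by
          rw [show (z + h • d + (h/2) • d') - (z + (h/2) • d') = h • d by module,
            norm_smul, Real.norm_eq_abs, abs_of_pos hh]
  have hX34 : |a (z - (h/2) • d') * D1 (D1 (D1 u d') d') d' (z - (h/2) • d')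
      - a (z - h • d - (h/2) • d') * D1 (D1 (D1 u d') d') d' (z - h • d - (h/2) • d')|
      ≤ 2 * Ka * KU * (h * ‖d‖) := by
    have h0 := hχ.2.2 _ hm3 _ hm4
    simp only [] at h0
    calc _ ≤ 2 * Ka * KU * ‖(z - (h/2) • d') - (z - h • d - (h/2) • d')‖ := h0
      _ = 2 * Ka * KU * (h * ‖d‖) := by
          rw [show (z - (h/2) • d') - (z - h • d - (h/2) • d') = h • d by module,
            norm_smul, Real.norm_eq_abs, abs_of_pos hh]
  -- rewrite the u-arguments of the third-order expansions into the goal form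
  rw [show (z + h • d + (h/2) • d') + (h/2) • d' = z + h • d + h • d' by module,
    show (z + h • d + (h/2) • d') - (h/2) • d' = z + h • d by module] at hδ1
  rw [show (z + (h/2) • d') + (h/2) • d' = z + h • d' by module,
    show (z + (h/2) • d') - (h/2) • d' = z by module] at hδ2
  rw [show (z - (h/2) • d') + (h/2) • d' = z by module,
    show (z - (h/2) • d') - (h/2) • d' = z - h • d' by module] at hδ3
  rw [show (z - h • d - (h/2) • d') + (h/2) • d' = z - h • d by module,
    show (z - h • d - (h/2) • d') - (h/2) • d' = z - h • d - h • d' by module] at hδ4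
  have happ := assemble h hh Ka (KU * ‖d'‖/8 * h^4) (K1 * ‖d‖/4 * h^3)
    (K2 * (‖d‖ + ‖d'‖)/2 * h^2) (2 * Ka * KU * (h * ‖d‖)) hKa0
    (a (z + h • d + (h/2) • d')) (a (z + (h/2) • d')) (a (z - (h/2) • d'))
    (a (z - h • d - (h/2) • d'))
    (u (z + h • d + h • d') - u (z + h • d)) (u (z + h • d') - u z)
    (u z - u (z - h • d')) (u (z - h • d) - u (z - h • d - h • d'))
    (D1 u d' (z + h • d + (h/2) • d')) (D1 u d' (z + (h/2) • d'))
    (D1 u d' (z - (h/2) • d')) (D1 u d' (z - h • d - (h/2) • d'))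
    (D1 (D1 (D1 u d') d') d' (z + h • d + (h/2) • d'))
    (D1 (D1 (D1 u d') d') d' (z + (h/2) • d'))
    (D1 (D1 (D1 u d') d') d' (z - (h/2) • d'))
    (D1 (D1 (D1 u d') d') d' (z - h • d - (h/2) • d'))
    (D1 (fun w => a w * D1 u d' w) d (z + ((h/2) • d + (h/2) • d')))
    (D1 (fun w => a w * D1 u d' w) d (z - ((h/2) • d + (h/2) • d')))
    (D1 (fun w => a w * D1 u d' w) d z)
    (hKa.2.1 _ hm1) (hKa.2.1 _ hm2) (hKa.2.1 _ hm3) (hKa.2.1 _ hm4)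
    hδ1 hδ2 hδ3 hδ4 hFp hFm hG0 hX12 hX34
  have hfin : 1/(2*h^2) * (Ka * (KU * ‖d'‖/8 * h^4) * 4 + h * (K1 * ‖d‖/4 * h^3 + K1 * ‖d‖/4 * h^3)
      + h^2 * (K2 * (‖d‖ + ‖d'‖)/2 * h^2)
      + h^3/24 * (2 * Ka * KU * (h * ‖d‖) + 2 * Ka * KU * (h * ‖d‖)))
      = B/2 * h^2 := by
    rw [hBdef]
    field_simp
    ring
  calc |1 / (2 * h ^ 2) *
          (a (z + h • d + (h / 2) • d') * (u (z + h • d + h • d') - u (z + h • d))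
            - a (z + (h / 2) • d') * (u (z + h • d') - u z)
            + a (z - (h / 2) • d') * (u z - u (z - h • d'))
            - a (z - h • d - (h / 2) • d') * (u (z - h • d) - u (z - h • d - h • d')))
        - D1 (fun w => a w * D1 u d' w) d z|
      ≤ 1/(2*h^2) * (Ka * (KU * ‖d'‖/8 * h^4) * 4
          + h * (K1 * ‖d‖/4 * h^3 + K1 * ‖d‖/4 * h^3)
          + h^2 * (K2 * (‖d‖ + ‖d'‖)/2 * h^2)
          + h^3/24 * (2 * Ka * KU * (h * ‖d‖) + 2 * Ka * KU * (h * ‖d‖))) := happ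
    _ = B/2 * h^2 := hfin
    _ ≤ (B/2 + 1) * h^2 := by nlinarith [sq_nonneg h]

lemma bridge (a u : ℝ × ℝ → ℝ) (h : ℝ) (z : ℝ × ℝ) :
    Lhp a h u z =
    (1 / (2 * h ^ 2)) *
        (a (z + h • ((1:ℝ),(0:ℝ)) + (h / 2) • ((0:ℝ),(1:ℝ))) *
            (u (z + h • ((1:ℝ),(0:ℝ)) + h • ((0:ℝ),(1:ℝ))) - u (z + h • ((1:ℝ),(0:ℝ))))
          - a (z + (h / 2) • ((0:ℝ),(1:ℝ))) * (u (z + h • ((0:ℝ),(1:ℝ))) - u z)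
          + a (z - (h / 2) • ((0:ℝ),(1:ℝ))) * (u z - u (z - h • ((0:ℝ),(1:ℝ))))
          - a (z - h • ((1:ℝ),(0:ℝ)) - (h / 2) • ((0:ℝ),(1:ℝ))) *
            (u (z - h • ((1:ℝ),(0:ℝ))) - u (z - h • ((1:ℝ),(0:ℝ)) - h • ((0:ℝ),(1:ℝ)))))
    + (1 / (2 * h ^ 2)) *
        (a (z + h • ((0:ℝ),(1:ℝ)) + (h / 2) • ((1:ℝ),(0:ℝ))) *
            (u (z + h • ((0:ℝ),(1:ℝ)) + h • ((1:ℝ),(0:ℝ))) - u (z + h • ((0:ℝ),(1:ℝ))))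
          - a (z + (h / 2) • ((1:ℝ),(0:ℝ))) * (u (z + h • ((1:ℝ),(0:ℝ))) - u z)
          + a (z - (h / 2) • ((1:ℝ),(0:ℝ))) * (u z - u (z - h • ((1:ℝ),(0:ℝ))))
          - a (z - h • ((0:ℝ),(1:ℝ)) - (h / 2) • ((1:ℝ),(0:ℝ))) *
            (u (z - h • ((0:ℝ),(1:ℝ))) - u (z - h • ((0:ℝ),(1:ℝ)) - h • ((1:ℝ),(0:ℝ))))) := by
  obtain ⟨x, y⟩ := z
  simp only [Lhp, Prod.smul_mk, Prod.mk_add_mk, Prod.mk_sub_mk, smul_eq_mul,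
    mul_one, mul_zero, add_zero, sub_zero]
  ring

/-- Second-order consistency of the seven-point discretization `Lhp` (the stencil designed
for nonnegative `a₁₂`) of the mixed-derivative part `∂x(a₁₂ ∂y u) + ∂y(a₁₂ ∂x u)` at interior
grid nodes. -/
theorem stmt5 (a12 : ℝ × ℝ → ℝ) (ha12 : C21On a12 Q2)
    (u : ℝ × ℝ → ℝ) (hu : ContDiffOn ℝ 4 u Q2) :
    ∃ C > (0 : ℝ), ∀ N : ℕ, Even N → 4 ≤ N →
      ∀ i j : ℕ, 1 ≤ i → i ≤ N - 1 → 1 ≤ j → j ≤ N - 1 →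
        |Lhp a12 (2 / (N : ℝ)) u (nodePt N i j) -
            (px (fun w => a12 w * py u w) (nodePt N i j)
              + py (fun w => a12 w * px u w) (nodePt N i j))|
          ≤ C * (2 / (N : ℝ)) ^ 2 := by
  obtain ⟨C₁, hC₁pos, hC₁⟩ := half_est a12 u ha12 hu ((1:ℝ),(0:ℝ)) ((0:ℝ),(1:ℝ))
  obtain ⟨C₂, hC₂pos, hC₂⟩ := half_est a12 u ha12 hu ((0:ℝ),(1:ℝ)) ((1:ℝ),(0:ℝ))
  refine ⟨C₁ + C₂, by linarith, ?_⟩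
  intro N _hNe hN4 i j hi1 hiN hj1 hjN
  set h : ℝ := 2 / (N : ℝ) with hhdef
  have hN4' : (4:ℝ) ≤ (N:ℝ) := by exact_mod_cast hN4
  have hN0 : (0:ℝ) < (N:ℝ) := by linarith
  have hh : 0 < h := by rw [hhdef]; positivity
  have hhN : h * (N:ℝ) = 2 := by rw [hhdef]; field_simp
  have hiN' : (i:ℝ) ≤ (N:ℝ) - 1 := by
    have : i + 1 ≤ N := by omega
    have := (Nat.cast_le (α := ℝ)).2 this
    push_cast at this
    linarith
  have hjN' : (j:ℝ) ≤ (N:ℝ) - 1 := by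
    have : j + 1 ≤ N := by omega
    have := (Nat.cast_le (α := ℝ)).2 this
    push_cast at this
    linarith
  have hi1' : (1:ℝ) ≤ (i:ℝ) := by exact_mod_cast hi1
  have hj1' : (1:ℝ) ≤ (j:ℝ) := by exact_mod_cast hj1
  have hcoord : ∀ (k γ : ℝ), 1 ≤ k → k ≤ (N:ℝ) - 1 → |γ| ≤ 1 →
      -1 ≤ -1 + k * h + γ * h ∧ -1 + k * h + γ * h ≤ 1 := by
    intro k γ hk1 hkN hγ
    have h1 : -1 ≤ γ := neg_le_of_abs_le hγ
    have h2 : γ ≤ 1 := le_of_abs_le hγ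
    constructor
    · nlinarith
    · nlinarith
  have hz1 : (nodePt N i j).1 = -1 + i * h := rfl
  have hz2 : (nodePt N i j).2 = -1 + j * h := rfl
  have hmem₁ : ∀ α β : ℝ, |α| ≤ 1 → |β| ≤ 1 →
      nodePt N i j + (α * h) • ((1:ℝ),(0:ℝ)) + (β * h) • ((0:ℝ),(1:ℝ)) ∈ Q2 := by
    intro α β hα hβ
    obtain ⟨ha1, ha2⟩ := hcoord (i:ℝ) α hi1' hiN' hα
    obtain ⟨hb1, hb2⟩ := hcoord (j:ℝ) β hj1' hjN' hβ
    simp only [nodePt, Prod.smul_mk, Prod.mk_add_mk, smul_eq_mul, mul_one, mul_zero,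
      add_zero, ← hhdef, Q2, Set.mem_Icc, Prod.mk_le_mk]
    refine ⟨⟨?_, ?_⟩, ?_, ?_⟩ <;> linarith
  have hmem₂ : ∀ α β : ℝ, |α| ≤ 1 → |β| ≤ 1 →
      nodePt N i j + (α * h) • ((0:ℝ),(1:ℝ)) + (β * h) • ((1:ℝ),(0:ℝ)) ∈ Q2 := by
    intro α β hα hβ
    obtain ⟨ha1, ha2⟩ := hcoord (j:ℝ) α hj1' hjN' hα
    obtain ⟨hb1, hb2⟩ := hcoord (i:ℝ) β hi1' hiN' hβ
    simp only [nodePt, Prod.smul_mk, Prod.mk_add_mk, smul_eq_mul, mul_one, mul_zero,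
      add_zero, ← hhdef, Q2, Set.mem_Icc, Prod.mk_le_mk]
    refine ⟨⟨?_, ?_⟩, ?_, ?_⟩ <;> linarith
  -- interior point
  have hint : nodePt N i j ∈ interior Q2 := by
    rw [Q2, ← Icc_prod_Icc, interior_prod_eq, interior_Icc]
    rw [Set.mem_prod]
    constructor
    · rw [Set.mem_Ioo, hz1]
      constructor <;> nlinarith
    · rw [Set.mem_Ioo, hz2]
      constructor <;> nlinarith
  have hnhds : Q2 ∈ 𝓝 (nodePt N i j) := mem_interior_iff_mem_nhds.mp hint
  have hopen : interior Q2 ∈ 𝓝 (nodePt N i j) := isOpen_interior.mem_nhds hint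
  have hpx : px (fun w => a12 w * py u w) (nodePt N i j)
      = D1 (fun w => a12 w * D1 u ((0:ℝ),(1:ℝ)) w) ((1:ℝ),(0:ℝ)) (nodePt N i j) := by
    have hev : (fun w => a12 w * py u w) =ᶠ[𝓝 (nodePt N i j)]
        (fun w => a12 w * D1 u ((0:ℝ),(1:ℝ)) w) := by
      filter_upwards [hopen] with w hw
      have hq : Q2 ∈ 𝓝 w := mem_interior_iff_mem_nhds.mp hw
      rw [py, D1, fderivWithin_of_mem_nhds hq]
    rw [px, hev.fderiv_eq, D1, fderivWithin_of_mem_nhds hnhds]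
  have hpy : py (fun w => a12 w * px u w) (nodePt N i j)
      = D1 (fun w => a12 w * D1 u ((1:ℝ),(0:ℝ)) w) ((0:ℝ),(1:ℝ)) (nodePt N i j) := by
    have hev : (fun w => a12 w * px u w) =ᶠ[𝓝 (nodePt N i j)]
        (fun w => a12 w * D1 u ((1:ℝ),(0:ℝ)) w) := by
      filter_upwards [hopen] with w hw
      have hq : Q2 ∈ 𝓝 w := mem_interior_iff_mem_nhds.mp hw
      rw [px, D1, fderivWithin_of_mem_nhds hq]
    rw [py, hev.fderiv_eq, D1, fderivWithin_of_mem_nhds hnhds]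
  have h1 := hC₁ h hh (nodePt N i j) hmem₁
  have h2 := hC₂ h hh (nodePt N i j) hmem₂
  rw [bridge a12 u h (nodePt N i j), hpx, hpy]
  set z := nodePt N i j
  set S₁ := (1 / (2 * h ^ 2)) *
        (a12 (z + h • ((1:ℝ),(0:ℝ)) + (h / 2) • ((0:ℝ),(1:ℝ))) *
            (u (z + h • ((1:ℝ),(0:ℝ)) + h • ((0:ℝ),(1:ℝ))) - u (z + h • ((1:ℝ),(0:ℝ))))
          - a12 (z + (h / 2) • ((0:ℝ),(1:ℝ))) * (u (z + h • ((0:ℝ),(1:ℝ))) - u z)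
          + a12 (z - (h / 2) • ((0:ℝ),(1:ℝ))) * (u z - u (z - h • ((0:ℝ),(1:ℝ))))
          - a12 (z - h • ((1:ℝ),(0:ℝ)) - (h / 2) • ((0:ℝ),(1:ℝ))) *
            (u (z - h • ((1:ℝ),(0:ℝ))) - u (z - h • ((1:ℝ),(0:ℝ)) - h • ((0:ℝ),(1:ℝ))))) with hS₁
  set S₂ := (1 / (2 * h ^ 2)) *
        (a12 (z + h • ((0:ℝ),(1:ℝ)) + (h / 2) • ((1:ℝ),(0:ℝ))) *
            (u (z + h • ((0:ℝ),(1:ℝ)) + h • ((1:ℝ),(0:ℝ))) - u (z + h • ((0:ℝ),(1:ℝ))))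
          - a12 (z + (h / 2) • ((1:ℝ),(0:ℝ))) * (u (z + h • ((1:ℝ),(0:ℝ))) - u z)
          + a12 (z - (h / 2) • ((1:ℝ),(0:ℝ))) * (u z - u (z - h • ((1:ℝ),(0:ℝ))))
          - a12 (z - h • ((0:ℝ),(1:ℝ)) - (h / 2) • ((1:ℝ),(0:ℝ))) *
            (u (z - h • ((0:ℝ),(1:ℝ))) - u (z - h • ((0:ℝ),(1:ℝ)) - h • ((1:ℝ),(0:ℝ))))) with hS₂
  set P₁ := D1 (fun w => a12 w * D1 u ((0:ℝ),(1:ℝ)) w) ((1:ℝ),(0:ℝ)) z with hP₁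
  set P₂ := D1 (fun w => a12 w * D1 u ((1:ℝ),(0:ℝ)) w) ((0:ℝ),(1:ℝ)) z with hP₂
  have key : S₁ + S₂ - (P₁ + P₂) = (S₁ - P₁) + (S₂ - P₂) := by ring
  rw [key]
  calc |(S₁ - P₁) + (S₂ - P₂)| ≤ |S₁ - P₁| + |S₂ - P₂| := abs_add_le _ _
    _ ≤ C₁ * h ^ 2 + C₂ * h ^ 2 := add_le_add h1 h2
    _ = (C₁ + C₂) * h ^ 2 := by ring
end
end

section
/- Let U be a nonempty bounded open subset of ℝ². Let a₁₁, a₁₂, a₂₂ be continuously differentiable on U and continuous on the closure of U, with the matrix ((a₁₁(x),a₁₂(x)),(a₁₂(x),a₂₂(x))) symmetric positive definite at every point of the closure of U, and let a be continuous on U with a ≥ 0. Suppose u is continuous on the closure of U, twice continuously differentiable in U, satisfies ∂x(a₁₁ ∂x u + a₁₂ ∂y u) + ∂y(a₁₂ ∂x u + a₂₂ ∂y u) − a u = 0 everywhere in U, and u = 0 at every point of the topological frontier of U. Then u = 0 on the closure of U. -/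
open Set

noncomputable section

/-- Second derivative test: at a local max of a C² function, the second derivative is ≤ 0. -/
lemma secondDerivTestAux (g : ℝ → ℝ) (hg : ContDiffAt ℝ 2 g 0) (hmax : IsLocalMax g 0) :
    deriv (deriv g) 0 ≤ 0 := by
  by_contra hc
  push_neg at hc
  -- g is C² on an open neighborhood
  obtain ⟨s, hs, hgs⟩ := hg.contDiffOn (m := 2) le_rfl (by norm_num)
  obtain ⟨s', hs's, hs'o, h0s'⟩ := mem_nhds_iff.mp hs
  have hgs' : ContDiffOn ℝ 2 g s' := hgs.mono hs's
  have hderg : ∀ x ∈ s', DifferentiableAt ℝ g x := fun x hx =>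
    (hgs'.contDiffAt (hs'o.mem_nhds hx)).differentiableAt (by norm_num)
  -- deriv g is differentiable at 0
  have hdg : DifferentiableAt ℝ (deriv g) 0 := by
    have h2 : ContDiffAt ℝ 1 (fderiv ℝ g) 0 := hg.fderiv_right (by norm_num)
    have h3 : DifferentiableAt ℝ (fun x => (fderiv ℝ g x) 1) 0 :=
      (h2.differentiableAt (by norm_num)).clm_apply (differentiableAt_const _)
    have : (fun x => (fderiv ℝ g x) 1) = deriv g := by
      funext x; exact fderiv_apply_one_eq_deriv
    rwa [this] at h3
  have hder : HasDerivAt (deriv g) (deriv (deriv g) 0) 0 := hdg.hasDerivAt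
  have h0 : deriv g 0 = 0 := hmax.deriv_eq_zero
  -- eventually deriv g > 0 to the right of 0
  have hslope := hasDerivAt_iff_tendsto_slope.mp hder
  have hpos : ∀ᶠ t in nhdsWithin 0 (Ioi 0), 0 < deriv g t := by
    have h1 : ∀ᶠ t in nhdsWithin (0:ℝ) {0}ᶜ, 0 < slope (deriv g) 0 t :=
      hslope.eventually (eventually_gt_nhds hc)
    have h2 : ∀ᶠ t in nhdsWithin (0:ℝ) (Ioi 0), 0 < slope (deriv g) 0 t :=
      h1.filter_mono (nhdsWithin_mono 0 (fun t ht => ne_of_gt ht))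
    have h3 : ∀ᶠ t in nhdsWithin (0:ℝ) (Ioi 0), t ∈ Ioi (0:ℝ) :=
      eventually_mem_nhdsWithin
    filter_upwards [h2, h3] with t ht1 ht2
    have ht2' : (0:ℝ) < t := ht2
    have hsl : slope (deriv g) 0 t = deriv g t / t := by
      rw [slope_def_field, h0]; ring
    rw [hsl] at ht1
    have := (div_pos_iff.mp ht1)
    rcases this with ⟨h, _⟩ | ⟨_, h⟩
    · exact h
    · linarith
  obtain ⟨b, hb, hIoo⟩ := mem_nhdsGT_iff_exists_Ioo_subset.mp hpos
  have hb0 : (0:ℝ) < b := hb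
  -- find δ with Icc 0 δ ⊆ s' ∩ ball and δ < b
  have hloc : ∀ᶠ t in nhds (0:ℝ), g t ≤ g 0 := hmax
  obtain ⟨e, he0, hball⟩ := Metric.eventually_nhds_iff_ball.mp (hloc.and (hs'o.eventually_mem h0s'))
  set δ := min (b/2) (e/2) with hδdef
  have hδ0 : 0 < δ := by positivity
  have hδb : δ < b := lt_of_le_of_lt (min_le_left _ _) (by linarith)
  have hδe : δ < e := lt_of_le_of_lt (min_le_right _ _) (by linarith)
  have hsub : Icc (0:ℝ) δ ⊆ Metric.ball (0:ℝ) e := by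
    intro t ht
    rw [Metric.mem_ball, Real.dist_eq, sub_zero, abs_of_nonneg ht.1]
    linarith [ht.2]
  have hsubs' : Icc (0:ℝ) δ ⊆ s' := fun t ht => (hball t (hsub ht)).2
  -- g strictly monotone on Icc 0 δ
  have hmono : StrictMonoOn g (Icc 0 δ) := by
    apply strictMonoOn_of_deriv_pos (convex_Icc 0 δ)
    · exact (hgs'.continuousOn.mono hsubs')
    · intro x hx
      rw [interior_Icc] at hx
      exact hIoo ⟨hx.1, lt_trans hx.2 hδb⟩
  have h1 : g 0 < g δ := hmono (left_mem_Icc.mpr hδ0.le) (right_mem_Icc.mpr hδ0.le) hδ0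
  have h2 : g δ ≤ g 0 := (hball δ (hsub (right_mem_Icc.mpr hδ0.le))).1
  linarith


lemma dirLine (z w : ℝ × ℝ) : ContDiff ℝ ⊤ (fun t : ℝ => z + t • w) :=
  contDiff_const.add (contDiff_id.smul contDiff_const)

lemma dirHasDerivAt (z w : ℝ × ℝ) (t : ℝ) :
    HasDerivAt (fun t : ℝ => z + t • w) w t := by
  have h : HasDerivAt (fun t : ℝ => t • w) ((1:ℝ) • w) t := (hasDerivAt_id t).smul_const w
  simpa using h.const_add z

/-- Directional second derivative of a C² function equals the second fderiv applied twice. -/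
lemma dirSecondDeriv (v : ℝ × ℝ → ℝ) (z w : ℝ × ℝ) (hv : ContDiffAt ℝ 2 v z) :
    ContDiffAt ℝ 2 (fun t : ℝ => v (z + t • w)) 0 ∧
    deriv (deriv (fun t : ℝ => v (z + t • w))) 0 = fderiv ℝ (fderiv ℝ v) z w w := by
  have hℓ : ContDiffAt ℝ 2 (fun t : ℝ => z + t • w) 0 := (dirLine z w).contDiffAt.of_le le_top
  have hz0 : ((fun t : ℝ => z + t • w) 0) = z := by simp
  constructor
  · exact ContDiffAt.comp 0 (by simpa using hv) hℓ
  · -- neighborhood where v is C²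
    obtain ⟨s, hs, hvs⟩ := hv.contDiffOn (m := 2) le_rfl (by norm_num)
    obtain ⟨s', hs's, hs'o, hzs'⟩ := mem_nhds_iff.mp hs
    have hvs' : ContDiffOn ℝ 2 v s' := hvs.mono hs's
    have hdiff : ∀ x ∈ s', DifferentiableAt ℝ v x := fun x hx =>
      (hvs'.contDiffAt (hs'o.mem_nhds hx)).differentiableAt (by norm_num)
    -- eventually, deriv of the line composition = fderiv v (ℓ t) w
    have hev : ∀ᶠ t in nhds (0:ℝ), deriv (fun t : ℝ => v (z + t • w)) t
        = fderiv ℝ v (z + t • w) w := by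
      have hcont : Continuous (fun t : ℝ => z + t • w) := (dirLine z w).continuous
      have hpre : (fun t : ℝ => z + t • w) ⁻¹' s' ∈ nhds (0:ℝ) :=
        hcont.continuousAt.preimage_mem_nhds (by simpa using hs'o.mem_nhds hzs')
      filter_upwards [hpre] with t ht
      have h1 : HasFDerivAt v (fderiv ℝ v (z + t • w)) (z + t • w) := (hdiff _ ht).hasFDerivAt
      exact (h1.comp_hasDerivAt t (dirHasDerivAt z w t)).deriv
    rw [Filter.EventuallyEq.deriv_eq hev]
    -- now differentiate t ↦ fderiv v (ℓ t) w at 0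
    have hD : DifferentiableAt ℝ (fderiv ℝ v) z := (hv.fderiv_right (m := 1) (by norm_num)).differentiableAt (by norm_num)
    have h2 : HasFDerivAt (fderiv ℝ v) (fderiv ℝ (fderiv ℝ v) z) z := hD.hasFDerivAt
    have h3 : HasDerivAt (fun t : ℝ => fderiv ℝ v (z + t • w)) (fderiv ℝ (fderiv ℝ v) z w) 0 := by
      have h2' : HasFDerivAt (fderiv ℝ v) (fderiv ℝ (fderiv ℝ v) z) (z + (0:ℝ) • w) := by
        simpa using h2
      exact h2'.comp_hasDerivAt 0 (dirHasDerivAt z w 0)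
    have h4 : HasDerivAt (fun t : ℝ => fderiv ℝ v (z + t • w) w)
        (fderiv ℝ (fderiv ℝ v) z w w) 0 := by
      have := h3.clm_apply (hasDerivAt_const 0 w)
      simpa using this
    exact h4.deriv


lemma bilinExpand (B : (ℝ × ℝ) →L[ℝ] (ℝ × ℝ) →L[ℝ] ℝ) (w : ℝ × ℝ) :
    B w w = w.1^2 * B (1,0) (1,0) + w.1 * w.2 * (B (1,0) (0,1) + B (0,1) (1,0))
      + w.2^2 * B (0,1) (0,1) := by
  have hw : w = w.1 • ((1:ℝ),(0:ℝ)) + w.2 • ((0:ℝ),(1:ℝ)) := by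
    ext <;> simp
  conv_lhs => rw [hw]
  simp only [map_add, map_smul, ContinuousLinearMap.add_apply,
    ContinuousLinearMap.smul_apply, smul_eq_mul]
  ring

lemma traceLemma (p q r B11 S B22 K : ℝ) (hp : 0 < p) (hdet : 0 < p * r - q^2)
    (hq : ∀ w1 w2 : ℝ, w1^2 * B11 + w1 * w2 * S + w2^2 * B22 ≤ -K * w1^2) :
    p * B11 + q * S + r * B22 ≤ -K * p := by
  set s := Real.sqrt p with hs
  have hs0 : 0 < s := Real.sqrt_pos.mpr hp
  have hs2 : s^2 = p := Real.sq_sqrt hp.le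
  set t := Real.sqrt (r - q^2 / p) with ht
  have hrq : 0 ≤ r - q^2 / p := by
    rw [sub_nonneg, div_le_iff₀ hp]; nlinarith
  have ht2 : t^2 = r - q^2 / p := Real.sq_sqrt hrq
  have hb := hq s (q / s)
  have hc := hq 0 t
  have h1 : s * (q / s) = q := by field_simp
  have h2 : (q / s)^2 = q^2 / p := by rw [div_pow, hs2]
  rw [hs2, h1, h2] at hb
  simp at hc
  rw [ht2] at hc
  have : (r - q^2 / p) * B22 + (p * B11 + q * S + q^2 / p * B22)
      = p * B11 + q * S + r * B22 := by ring
  linarith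

lemma posdefEntries {p q r : ℝ}
    (h : (!![p, q; q, r] : Matrix (Fin 2) (Fin 2) ℝ).PosDef) :
    0 < p ∧ 0 < p * r - q^2 := by
  have h1 := h.dotProduct_mulVec_pos (x := ![1, 0]) (by
    intro hx
    have := congr_fun hx 0
    simp at this)
  have h2 : 0 < p := by
    simpa [dotProduct, Matrix.mulVec, Fin.sum_univ_two] using h1
  refine ⟨h2, ?_⟩
  have h3 := h.dotProduct_mulVec_pos (x := ![q, -p]) (by
    intro hx
    have := congr_fun hx 1
    simp at this
    exact h2.ne' this.symm.symm)
  simp [dotProduct, Matrix.mulVec, Fin.sum_univ_two] at h3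
  nlinarith [h3]


lemma derivDiffAt (g : ℝ → ℝ) (x : ℝ) (hg : ContDiffAt ℝ 2 g x) :
    DifferentiableAt ℝ (deriv g) x := by
  have h2 : ContDiffAt ℝ 1 (fderiv ℝ g) x := hg.fderiv_right (by norm_num)
  have h3 : DifferentiableAt ℝ (fun y => (fderiv ℝ g y) 1) x :=
    (h2.differentiableAt (by norm_num)).clm_apply (differentiableAt_const _)
  have he : (fun y => (fderiv ℝ g y) 1) = deriv g := funext (fun _ => fderiv_apply_one_eq_deriv)
  rwa [he] at h3

set_option maxHeartbeats 2000000 in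
lemma keyNonpos (U : Set (ℝ × ℝ)) (hUo : IsOpen U)
    (hUb : Bornology.IsBounded U)
    (a11 a12 a22 a u : ℝ × ℝ → ℝ)
    (ha11 : ContDiffOn ℝ 1 a11 U) (ha11c : ContinuousOn a11 (closure U))
    (ha12 : ContDiffOn ℝ 1 a12 U)
    (ha22 : ContDiffOn ℝ 1 a22 U)
    (hpd : ∀ z ∈ closure U, (!![a11 z, a12 z; a12 z, a22 z] : Matrix (Fin 2) (Fin 2) ℝ).PosDef)
    (ha0 : ∀ z ∈ U, 0 ≤ a z)
    (huc : ContinuousOn u (closure U)) (hu : ContDiffOn ℝ 2 u U)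
    (hpde : ∀ z ∈ U,
      px (fun w => a11 w * px u w + a12 w * py u w) z
        + py (fun w => a12 w * px u w + a22 w * py u w) z - a z * u z = 0)
    (hbd : ∀ z ∈ frontier U, u z = 0) :
    ∀ z ∈ closure U, u z ≤ 0 := by
  by_contra hcon
  push_neg at hcon
  obtain ⟨z', hz'cl, hz'pos⟩ := hcon
  have hUne : U.Nonempty := by
    by_contra h
    rw [not_nonempty_iff_eq_empty] at h
    rw [h] at hz'cl; simp at hz'cl
  have hclne : (closure U).Nonempty := hUne.closure
  have hclcomp : IsCompact (closure U) :=
    Metric.isCompact_of_isClosed_isBounded isClosed_closure hUb.closure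
  -- decompose closure U
  have hfr : ∀ z ∈ closure U, z ∈ U ∨ u z = 0 := by
    intro z hz
    by_cases h : z ∈ U
    · exact Or.inl h
    · exact Or.inr (hbd z (by rw [hUo.frontier_eq]; exact ⟨hz, h⟩))
  -- the max of u
  obtain ⟨zM, hzMcl, hzMmax⟩ := hclcomp.exists_isMaxOn hclne huc
  set M := u zM with hMdef
  have hM : 0 < M := lt_of_lt_of_le hz'pos (hzMmax hz'cl)
  set δ := M / 2 with hδdef
  have hδ : 0 < δ := by positivity
  have hδM : δ < M := by simp [hδdef]; linarith
  have hzMU : zM ∈ U := by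
    rcases hfr zM hzMcl with h | h
    · exact h
    · rw [← hMdef] at h; linarith
  set W := U ∩ u ⁻¹' (Ioi δ) with hWdef
  have hWo : IsOpen W := (huc.mono subset_closure).isOpen_inter_preimage hUo isOpen_Ioi
  have hzMW : zM ∈ W := ⟨hzMU, by simp [← hMdef]; linarith⟩
  set K := closure W with hKdef
  have hKcl : K ⊆ closure U := closure_mono inter_subset_left
  have hKδ : ∀ z ∈ K, δ ≤ u z := by
    intro z hz
    have hclosed : IsClosed (closure U ∩ u ⁻¹' (Ici δ)) :=
      huc.preimage_isClosed_of_isClosed isClosed_closure isClosed_Ici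
    have hsub : W ⊆ closure U ∩ u ⁻¹' (Ici δ) :=
      fun w hw => ⟨subset_closure hw.1, Set.mem_preimage.mpr (mem_Ici.mpr (le_of_lt hw.2))⟩
    exact (closure_minimal hsub hclosed hz).2
  have hKU : K ⊆ U := by
    intro z hz
    rcases hfr z (hKcl hz) with h | h
    · exact h
    · exfalso; have := hKδ z hz; rw [h] at this; linarith
  have hKcomp : IsCompact K := hclcomp.of_isClosed_subset isClosed_closure hKcl
  have hKne : K.Nonempty := ⟨zM, subset_closure hzMW⟩
  -- lower bound for a11
  obtain ⟨zl, hzl, hzlmin⟩ := hclcomp.exists_isMinOn hclne ha11c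
  set lam := a11 zl with hlamdef
  have hlam : 0 < lam := (posdefEntries (hpd zl hzl)).1
  have hlamle : ∀ z ∈ closure U, lam ≤ a11 z := fun z hz => hzlmin hz
  -- bound for |px a11 + py a12| on K
  have hpxa11 : ContinuousOn (fun z => px a11 z) U := by
    have h := ha11.continuousOn_fderiv_of_isOpen hUo le_rfl
    exact h.clm_apply continuousOn_const
  have hpya12 : ContinuousOn (fun z => py a12 z) U := by
    have h := ha12.continuousOn_fderiv_of_isOpen hUo le_rfl
    exact h.clm_apply continuousOn_const
  have habscont : ContinuousOn (fun z => |px a11 z + py a12 z|) K :=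
    (continuous_abs.comp_continuousOn ((hpxa11.add hpya12).mono hKU))
  obtain ⟨zC, hzC, hzCmax⟩ := hKcomp.exists_isMaxOn hKne habscont
  set C0 := |px a11 zC + py a12 zC| with hC0def
  have hC0 : 0 ≤ C0 := abs_nonneg _
  have hCb : ∀ z ∈ K, |px a11 z + py a12 z| ≤ C0 := fun z hz => hzCmax hz
  -- choose α
  set α := C0 / lam + 1 with hαdef
  have hα : 0 < α := by positivity
  have hαlam : C0 < α * lam := by
    rw [hαdef]; rw [add_mul, div_mul_cancel₀ _ hlam.ne', one_mul]; linarith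
  -- bound for the first coordinate
  obtain ⟨zR, hzR, hzRmax⟩ := hclcomp.exists_isMaxOn hclne continuous_fst.continuousOn
  set R := zR.1 with hRdef
  have hRb : ∀ z ∈ closure U, z.1 ≤ R := fun z hz => hzRmax hz
  -- choose ε
  set ε := δ / (2 * Real.exp (α * R)) with hεdef
  have hε : 0 < ε := by positivity
  set φ : ℝ × ℝ → ℝ := fun z => ε * Real.exp (α * z.1) with hφdef
  have hφpos : ∀ z, 0 < φ z := fun z => by positivity
  have hφbound : ∀ z ∈ closure U, φ z ≤ δ / 2 := by
    intro z hz
    have h1 : Real.exp (α * z.1) ≤ Real.exp (α * R) :=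
      Real.exp_le_exp.mpr (mul_le_mul_of_nonneg_left (hRb z hz) hα.le)
    have h2 : 0 < Real.exp (α * R) := Real.exp_pos _
    have h3 : φ z = ε * Real.exp (α * z.1) := rfl
    have h5 : ε * Real.exp (α * z.1) ≤ ε * Real.exp (α * R) :=
      mul_le_mul_of_nonneg_left h1 hε.le
    have h4 : ε * Real.exp (α * R) = δ / 2 := by
      rw [hεdef]; field_simp
    rw [h3]; linarith
  set v : ℝ × ℝ → ℝ := fun z => u z + φ z with hvdef
  -- φ is smooth
  have hφC : ContDiff ℝ 2 φ := by
    rw [hφdef]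
    exact contDiff_const.mul (Real.contDiff_exp.comp (contDiff_const.mul contDiff_fst))
  have hvK : ContinuousOn v K :=
    (huc.mono hKcl).add (hφC.continuous.continuousOn)
  obtain ⟨z1, hz1K, hz1max⟩ := hKcomp.exists_isMaxOn hKne hvK
  have hvM : M < v zM := by
    have h1 : v zM = u zM + φ zM := rfl
    have h2 := hφpos zM
    rw [h1, ← hMdef]
    linarith
  have hv1 : v zM ≤ v z1 := hz1max (subset_closure hzMW)
  have hz1W : z1 ∈ W := by
    by_contra h
    have hz1U : z1 ∈ U := hKU hz1K
    have h1 : u z1 ≤ δ := by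
      by_contra h2
      exact h ⟨hz1U, by simpa using lt_of_not_ge h2⟩
    have h2 : v z1 ≤ δ + δ / 2 := by
      rw [hvdef]; simp only
      linarith [hφbound z1 (hKcl hz1K)]
    have h3 : M ≤ δ + δ / 2 := le_trans (le_of_lt hvM) (le_trans hv1 h2)
    rw [hδdef] at h3
    linarith
  have hz1U : z1 ∈ U := hz1W.1
  have hz1cl : z1 ∈ closure U := hKcl hz1K
  have huz1 : δ < u z1 := hz1W.2
  have hloc : IsLocalMax v z1 :=
    hz1max.isLocalMax (Filter.mem_of_superset (hWo.mem_nhds hz1W) subset_closure)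
  -- first derivative vanishing
  set E' := Real.exp (α * z1.1) with hE'def
  have hE' : 0 < E' := Real.exp_pos _
  set E := ε * α * E' with hEdef
  have hE : 0 < E := by positivity
  have hφfd : ∀ z : ℝ × ℝ, HasFDerivAt φ
      ((ε * α * Real.exp (α * z.1)) • (ContinuousLinearMap.fst ℝ ℝ ℝ)) z := by
    intro z
    have h1 : HasFDerivAt (fun w : ℝ × ℝ => α * w.1)
        (α • (ContinuousLinearMap.fst ℝ ℝ ℝ)) z := (hasFDerivAt_fst).const_mul α
    have h2 := h1.exp
    have h3 := h2.const_mul ε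
    rw [hφdef]
    have hsm : (ε * α * Real.exp (α * z.1)) • ContinuousLinearMap.fst ℝ ℝ ℝ
        = ε • Real.exp (α * z.1) • α • ContinuousLinearMap.fst ℝ ℝ ℝ := by
      rw [smul_smul, smul_smul]
      ring_nf
    rw [hsm]; exact h3
  have hu2 : ContDiffAt ℝ 2 u z1 := hu.contDiffAt (hUo.mem_nhds hz1U)
  have hudiff : DifferentiableAt ℝ u z1 := hu2.differentiableAt (by norm_num)
  have hfdv : fderiv ℝ v z1 = fderiv ℝ u z1 + (E • (ContinuousLinearMap.fst ℝ ℝ ℝ)) := by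
    rw [hvdef]
    rw [fderiv_fun_add hudiff (hφfd z1).differentiableAt, (hφfd z1).fderiv]
  have hfdv0 : fderiv ℝ v z1 = 0 := hloc.fderiv_eq_zero
  have hfdu : fderiv ℝ u z1 = -(E • (ContinuousLinearMap.fst ℝ ℝ ℝ)) := by
    rw [hfdv0] at hfdv
    exact eq_neg_of_add_eq_zero_left hfdv.symm
  have hpxu : px u z1 = -E := by
    rw [px, hfdu]; simp
  have hpyu : py u z1 = 0 := by
    rw [py, hfdu]; simp
  -- second derivative bilinear form
  set B := fderiv ℝ (fderiv ℝ u) z1 with hBdef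
  have hBdiff : DifferentiableAt ℝ (fderiv ℝ u) z1 :=
    (hu2.fderiv_right (m := 1) (by norm_num)).differentiableAt (by norm_num)
  -- quadratic form bound
  have hQ : ∀ w : ℝ × ℝ, B w w ≤ -(ε * α ^ 2 * E') * w.1 ^ 2 := by
    intro w
    have hvC2 : ContDiffAt ℝ 2 v z1 := hu2.add hφC.contDiffAt
    obtain ⟨hgC2, _⟩ := dirSecondDeriv v z1 w hvC2
    have hgmax : IsLocalMax (fun t : ℝ => v (z1 + t • w)) 0 := by
      have hcont : ContinuousAt (fun t : ℝ => z1 + t • w) 0 :=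
        ((dirLine z1 w).continuous).continuousAt
      have h := IsLocalMax.comp_continuous (f := v) (g := fun t : ℝ => z1 + t • w)
        (b := (0:ℝ)) (by simpa using hloc) hcont
      exact h
    have htest := secondDerivTestAux _ hgC2 hgmax
    -- split into u-part and φ-part
    set c := α * z1.1 with hcdef
    set m := α * w.1 with hmdef
    have hgv : (fun t : ℝ => v (z1 + t • w))
        = fun t => u (z1 + t • w) + ε * Real.exp (c + m * t) := by
      funext t
      rw [hvdef, hφdef]
      simp only
      congr 2
      have h1 : (z1 + t • w).1 = z1.1 + t * w.1 := by simp
      rw [h1, hcdef, hmdef]; ring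
    -- derivative of the φ part
    have hgφ1 : ∀ t : ℝ, HasDerivAt (fun t => ε * Real.exp (c + m * t))
        ((ε * m) * Real.exp (c + m * t)) t := by
      intro t
      have h1 : HasDerivAt (fun t : ℝ => c + m * t) m t := by
        simpa using ((hasDerivAt_id t).const_mul m).const_add c
      have h2 := (h1.exp).const_mul ε
      have e : (ε * m) * Real.exp (c + m * t) = ε * (Real.exp (c + m * t) * m) := by ring
      rw [e]; exact h2
    have hgφderiv : deriv (fun t => ε * Real.exp (c + m * t))
        = fun t => (ε * m) * Real.exp (c + m * t) := funext fun t => (hgφ1 t).deriv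
    have hgφ2 : HasDerivAt (fun t => (ε * m) * Real.exp (c + m * t))
        ((ε * m * m) * Real.exp (c + m * 0)) 0 := by
      have h1 : HasDerivAt (fun t : ℝ => c + m * t) m 0 := by
        simpa using ((hasDerivAt_id (0:ℝ)).const_mul m).const_add c
      have h2 := (h1.exp).const_mul (ε * m)
      have e : (ε * m * m) * Real.exp (c + m * 0) = (ε * m) * (Real.exp (c + m * 0) * m) := by ring
      rw [e]; exact h2
    -- u-part C² and differentiability near 0
    obtain ⟨hguC2, hgu2⟩ := dirSecondDeriv u z1 w hu2
    have hline : ∀ t : ℝ, DifferentiableAt ℝ (fun s : ℝ => z1 + s • w) t :=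
      fun t => ((dirLine z1 w).differentiable (by simp)).differentiableAt
    have hguev : ∀ᶠ t in nhds (0:ℝ), DifferentiableAt ℝ (fun s : ℝ => u (z1 + s • w)) t := by
      have hpre : (fun t : ℝ => z1 + t • w) ⁻¹' U ∈ nhds (0:ℝ) :=
        ((dirLine z1 w).continuous.continuousAt).preimage_mem_nhds
          (by simpa using hUo.mem_nhds hz1U)
      filter_upwards [hpre] with t ht
      have hud : DifferentiableAt ℝ u (z1 + t • w) :=
        (hu.contDiffAt (hUo.mem_nhds ht)).differentiableAt (by norm_num)
      exact hud.comp t (hline t)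
    -- derivative of g_v splits eventually
    have hsplit : deriv (fun t : ℝ => v (z1 + t • w)) =ᶠ[nhds (0:ℝ)]
        fun t => deriv (fun s : ℝ => u (z1 + s • w)) t + (ε * m) * Real.exp (c + m * t) := by
      filter_upwards [hguev] with t ht
      rw [hgv, deriv_fun_add ht (hgφ1 t).differentiableAt, (hgφ1 t).deriv]
    have hstep : deriv (deriv (fun t : ℝ => v (z1 + t • w))) 0
        = deriv (deriv (fun s : ℝ => u (z1 + s • w))) 0 + (ε * m * m) * Real.exp (c + m * 0) := by
      rw [Filter.EventuallyEq.deriv_eq hsplit]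
      rw [deriv_fun_add (derivDiffAt _ 0 hguC2) hgφ2.differentiableAt, hgφ2.deriv]
    rw [hstep, hgu2] at htest
    have hexp0 : Real.exp (c + m * 0) = E' := by rw [hE'def, hcdef]; ring_nf
    rw [hexp0] at htest
    have h9 : (ε * m * m) * E' = (ε * α ^ 2 * E') * w.1 ^ 2 := by rw [hmdef]; ring
    linarith [htest, h9]
  -- expand the PDE at z1
  have hd11 : DifferentiableAt ℝ a11 z1 :=
    (ha11.contDiffAt (hUo.mem_nhds hz1U)).differentiableAt (by norm_num)
  have hd12 : DifferentiableAt ℝ a12 z1 :=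
    (ha12.contDiffAt (hUo.mem_nhds hz1U)).differentiableAt (by norm_num)
  have hd22 : DifferentiableAt ℝ a22 z1 :=
    (ha22.contDiffAt (hUo.mem_nhds hz1U)).differentiableAt (by norm_num)
  have hdpxu : DifferentiableAt ℝ (px u) z1 := by
    show DifferentiableAt ℝ (fun w => fderiv ℝ u w ((1:ℝ),(0:ℝ))) z1
    exact hBdiff.clm_apply (differentiableAt_const _)
  have hdpyu : DifferentiableAt ℝ (py u) z1 := by
    show DifferentiableAt ℝ (fun w => fderiv ℝ u w ((0:ℝ),(1:ℝ))) z1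
    exact hBdiff.clm_apply (differentiableAt_const _)
  have hfpx : fderiv ℝ (px u) z1 = B.flip ((1:ℝ),(0:ℝ)) := by
    have hpxeq : px u = fun y => fderiv ℝ u y ((1:ℝ),(0:ℝ)) := rfl
    have h := fderiv_clm_apply (x := z1) hBdiff (differentiableAt_const ((1:ℝ),(0:ℝ)))
    rw [hpxeq, h]
    simp
    rfl
  have hfpy : fderiv ℝ (py u) z1 = B.flip ((0:ℝ),(1:ℝ)) := by
    have hpyeq : py u = fun y => fderiv ℝ u y ((0:ℝ),(1:ℝ)) := rfl
    have h := fderiv_clm_apply (x := z1) hBdiff (differentiableAt_const ((0:ℝ),(1:ℝ)))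
    rw [hpyeq, h]
    simp
    rfl
  set B11 := B ((1:ℝ),(0:ℝ)) ((1:ℝ),(0:ℝ)) with hB11def
  set B12 := B ((1:ℝ),(0:ℝ)) ((0:ℝ),(1:ℝ)) with hB12def
  set B21 := B ((0:ℝ),(1:ℝ)) ((1:ℝ),(0:ℝ)) with hB21def
  set B22 := B ((0:ℝ),(1:ℝ)) ((0:ℝ),(1:ℝ)) with hB22def
  have hpxF1 : px (fun w => a11 w * px u w + a12 w * py u w) z1
      = a11 z1 * B11 + (-E) * (fderiv ℝ a11 z1 ((1:ℝ),(0:ℝ))) + a12 z1 * B12 := by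
    show fderiv ℝ (fun w => a11 w * px u w + a12 w * py u w) z1 ((1:ℝ),(0:ℝ)) = _
    rw [fderiv_fun_add (hd11.fun_mul hdpxu) (hd12.fun_mul hdpyu),
      fderiv_fun_mul hd11 hdpxu, fderiv_fun_mul hd12 hdpyu]
    simp only [ContinuousLinearMap.add_apply, ContinuousLinearMap.smul_apply, smul_eq_mul]
    rw [hfpx, hfpy, hpxu, hpyu]
    simp only [ContinuousLinearMap.flip_apply]
    ring
  have hpyF2 : py (fun w => a12 w * px u w + a22 w * py u w) z1
      = a12 z1 * B21 + (-E) * (fderiv ℝ a12 z1 ((0:ℝ),(1:ℝ))) + a22 z1 * B22 := by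
    show fderiv ℝ (fun w => a12 w * px u w + a22 w * py u w) z1 ((0:ℝ),(1:ℝ)) = _
    rw [fderiv_fun_add (hd12.fun_mul hdpxu) (hd22.fun_mul hdpyu),
      fderiv_fun_mul hd12 hdpxu, fderiv_fun_mul hd22 hdpyu]
    simp only [ContinuousLinearMap.add_apply, ContinuousLinearMap.smul_apply, smul_eq_mul]
    rw [hfpx, hfpy, hpxu, hpyu]
    simp only [ContinuousLinearMap.flip_apply]
    ring
  have heq : px (fun w => a11 w * px u w + a12 w * py u w) z1
      + py (fun w => a12 w * px u w + a22 w * py u w) z1 = a z1 * u z1 := by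
    linarith [hpde z1 hz1U]
  rw [hpxF1, hpyF2] at heq
  -- quadratic form in coordinates
  have hq' : ∀ w1 w2 : ℝ, w1^2 * B11 + w1 * w2 * (B12 + B21) + w2^2 * B22
      ≤ -(ε * α^2 * E') * w1^2 := by
    intro w1 w2
    have h := hQ (w1, w2)
    rw [bilinExpand] at h
    simpa using h
  have hpd1 := posdefEntries (hpd z1 hz1cl)
  have htr := traceLemma (a11 z1) (a12 z1) (a22 z1) B11 (B12 + B21) B22 (ε * α^2 * E')
    hpd1.1 hpd1.2 hq'
  have hCz1 : |fderiv ℝ a11 z1 ((1:ℝ),(0:ℝ)) + fderiv ℝ a12 z1 ((0:ℝ),(1:ℝ))| ≤ C0 :=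
    hCb z1 (subset_closure hz1W)
  have habs := abs_le.mp hCz1
  have hE2 : ε * α^2 * E' = α * E := by rw [hEdef]; ring
  have ha1 : lam ≤ a11 z1 := hlamle z1 hz1cl
  have hupos : 0 < u z1 := lt_trans hδ huz1
  have hann : 0 ≤ a z1 * u z1 := mul_nonneg (ha0 z1 hz1U) hupos.le
  rw [hE2] at htr
  have k2 : (α * E) * lam ≤ (α * E) * a11 z1 :=
    mul_le_mul_of_nonneg_left ha1 (by positivity)
  have k3 : E * (-C0) ≤ E * (fderiv ℝ a11 z1 ((1:ℝ),(0:ℝ)) + fderiv ℝ a12 z1 ((0:ℝ),(1:ℝ))) :=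
    mul_le_mul_of_nonneg_left habs.1 hE.le
  have k4 : 0 < E * (α * lam - C0) := mul_pos hE (by linarith)
  linarith [heq, htr, k2, k3, k4, hann]


/-- Uniqueness for the Dirichlet problem for the divergence-form elliptic operator
`∇·(A∇u) - a u` with symmetric positive definite coefficient matrix `A` and `a ≥ 0`,
on a nonempty bounded open set `U ⊆ ℝ²`: a solution that is continuous up to the
boundary and vanishes on the topological frontier vanishes identically. -/
theorem stmt9 (U : Set (ℝ × ℝ)) (hUne : U.Nonempty) (hUo : IsOpen U)
    (hUb : Bornology.IsBounded U)
    (a11 a12 a22 a u : ℝ × ℝ → ℝ)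
    (ha11 : ContDiffOn ℝ 1 a11 U) (ha11c : ContinuousOn a11 (closure U))
    (ha12 : ContDiffOn ℝ 1 a12 U) (ha12c : ContinuousOn a12 (closure U))
    (ha22 : ContDiffOn ℝ 1 a22 U) (ha22c : ContinuousOn a22 (closure U))
    (hpd : ∀ z ∈ closure U, (!![a11 z, a12 z; a12 z, a22 z] : Matrix (Fin 2) (Fin 2) ℝ).PosDef)
    (ha : ContinuousOn a U) (ha0 : ∀ z ∈ U, 0 ≤ a z)
    (huc : ContinuousOn u (closure U)) (hu : ContDiffOn ℝ 2 u U)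
    (hpde : ∀ z ∈ U,
      px (fun w => a11 w * px u w + a12 w * py u w) z
        + py (fun w => a12 w * px u w + a22 w * py u w) z - a z * u z = 0)
    (hbd : ∀ z ∈ frontier U, u z = 0) :
    ∀ z ∈ closure U, u z = 0 := by
  have hneg : ∀ z ∈ closure U, u z ≤ 0 :=
    keyNonpos U hUo hUb a11 a12 a22 a u ha11 ha11c ha12 ha22 hpd ha0 huc hu hpde hbd
  have h1 : px (fun x => -u x) = fun w => -(px u w) := by
    funext w
    show fderiv ℝ (fun x => -u x) w ((1:ℝ),(0:ℝ)) = -(fderiv ℝ u w ((1:ℝ),(0:ℝ)))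
    rw [fderiv_fun_neg]; simp
  have h2 : py (fun x => -u x) = fun w => -(py u w) := by
    funext w
    show fderiv ℝ (fun x => -u x) w ((0:ℝ),(1:ℝ)) = -(fderiv ℝ u w ((0:ℝ),(1:ℝ)))
    rw [fderiv_fun_neg]; simp
  have hpde' : ∀ z ∈ U,
      px (fun w => a11 w * px (fun x => -u x) w + a12 w * py (fun x => -u x) w) z
        + py (fun w => a12 w * px (fun x => -u x) w + a22 w * py (fun x => -u x) w) z
        - a z * (-u z) = 0 := by
    intro z hz
    have h3 : (fun w => a11 w * px (fun x => -u x) w + a12 w * py (fun x => -u x) w)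
        = fun w => -(a11 w * px u w + a12 w * py u w) := by
      funext w; rw [h1, h2]; ring
    have h4 : (fun w => a12 w * px (fun x => -u x) w + a22 w * py (fun x => -u x) w)
        = fun w => -(a12 w * px u w + a22 w * py u w) := by
      funext w; rw [h1, h2]; ring
    rw [h3, h4]
    have h5 : px (fun w => -(a11 w * px u w + a12 w * py u w)) z
        = -(px (fun w => a11 w * px u w + a12 w * py u w) z) := by
      show fderiv ℝ (fun w => -(a11 w * px u w + a12 w * py u w)) z ((1:ℝ),(0:ℝ))
        = -(fderiv ℝ (fun w => a11 w * px u w + a12 w * py u w) z ((1:ℝ),(0:ℝ)))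
      rw [fderiv_fun_neg]; simp
    have h6 : py (fun w => -(a12 w * px u w + a22 w * py u w)) z
        = -(py (fun w => a12 w * px u w + a22 w * py u w) z) := by
      show fderiv ℝ (fun w => -(a12 w * px u w + a22 w * py u w)) z ((0:ℝ),(1:ℝ))
        = -(fderiv ℝ (fun w => a12 w * px u w + a22 w * py u w) z ((0:ℝ),(1:ℝ)))
      rw [fderiv_fun_neg]; simp
    rw [h5, h6]
    have h7 := hpde z hz
    linarith
  have hpos : ∀ z ∈ closure U, -u z ≤ 0 := by
    have := keyNonpos U hUo hUb a11 a12 a22 a (fun x => -u x) ha11 ha11c ha12 ha22 hpd ha0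
      huc.neg hu.neg (by
        intro z hz
        have := hpde' z hz
        simpa using this)
      (fun z hz => by simp [hbd z hz])
    intro z hz
    simpa using this z hz
  intro z hz
  have ha' := hneg z hz
  have hb' := hpos z hz
  linarith
end
end
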